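/- arXiv:1109.2359 — 3 statements merged into one kernel-verified Lean document; each statement's English description precedes it below -/
import Mathlib

section
/- Let σ and σ' be coprime weight vectors, with coordinatewise product σσ'. Let R be the quotient of the disjoint union P(σ') ⊔ P(σ) by the equivalence relation generated by e(σ'/1)(z) ∼ e(σ/1)(z) for all z ∈ ℂP^n, with the quotient topology. Then the map g : R → P(σσ') induced by e(σσ'/σ') on P(σ') and by e(σσ'/σ) on P(σ) is well defined and a homeomorphism. In other words, the commutative square formed by e(σ/1), e(σ'/1), e(σσ'/σ), e(σσ'/σ') is a pushout square of topological spaces. -/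
noncomputable section

/-- The unit sphere in `ℂ^m` (the sphere `S^{2m-1}`). -/
abbrev Sph (m : ℕ) : Type := {z : Fin m → ℂ // ∑ i, ‖z i‖ ^ 2 = 1}

/-- The relation on the sphere whose quotient is the weighted projective space `P(χ)`:
`z ∼ w` iff `w = t ·_χ z` for some unimodular `t`. -/
def wRel (m : ℕ) (χ : Fin m → ℕ) (z w : Sph m) : Prop :=
  ∃ t : ℂ, ‖t‖ = 1 ∧ ∀ i, (w : Fin m → ℂ) i = t ^ χ i * (z : Fin m → ℂ) i

/-- The weighted projective space `P(χ)`, with the quotient topology. -/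
abbrev WP (m : ℕ) (χ : Fin m → ℕ) : Type := Quot (wRel m χ)

/-- The class `[z]_χ` of a point of the sphere in `P(χ)`. -/
def wpMk (m : ℕ) (χ : Fin m → ℕ) (z : Sph m) : WP m χ := Quot.mk _ z

/-- `s(χ,ω)`: the least positive integer `s` with `ω i ∣ s * χ i` for all `i`. -/
def sVal (m : ℕ) (χ ω : Fin m → ℕ) : ℕ := sInf {s : ℕ | 0 < s ∧ ∀ i, ω i ∣ s * χ i}

/-- The exponents `d i = s(χ,ω)·χ i/ω i` of the map `e(χ/ω)`. -/
def dExp (m : ℕ) (χ ω : Fin m → ℕ) (i : Fin m) : ℕ := sVal m χ ω * χ i / ω i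

/-- `IsNorm m χ v w` says that `w` is the normalisation `N_χ(v)`, i.e. `w` lies on the
sphere and has the form `(λ^{χ_0} v_0, …)` for some real `λ > 0`. -/
def IsNorm (m : ℕ) (χ : Fin m → ℕ) (v : Fin m → ℂ) (w : Sph m) : Prop :=
  ∃ l : ℝ, 0 < l ∧ ∀ i, (w : Fin m → ℂ) i = (l : ℂ) ^ χ i * v i

/-- Coordinatewise powers of a point of the sphere. -/
def powVec (m : ℕ) (d : Fin m → ℕ) (z : Sph m) : Fin m → ℂ :=
  fun i => (z : Fin m → ℂ) i ^ d i

/-- `IsEMap m χ ω e` says that `e` is the canonical map `e(χ/ω) : P(ω) → P(χ)`: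
it is continuous and sends `[z]_ω` to `[N_χ(z_0^{d_0}, …, z_n^{d_n})]_χ`. -/
def IsEMap (m : ℕ) (χ ω : Fin m → ℕ) (e : WP m ω → WP m χ) : Prop :=
  Continuous e ∧ ∀ z w : Sph m,
    IsNorm m χ (powVec m (dExp m χ ω) z) w → e (wpMk m ω z) = wpMk m χ w

namespace S9

variable {m : ℕ}

lemma sph_ne_zero (z : Sph m) : ∃ i, (z : Fin m → ℂ) i ≠ 0 := by
  by_contra h
  push_neg at h
  have h2 := z.2
  simp [h] at h2

lemma exists_scale (χ : Fin m → ℕ) (hχ : ∀ i, 1 ≤ χ i) (v : Fin m → ℂ)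
    (hv : ∃ j, v j ≠ 0) :
    ∃ l : ℝ, 0 < l ∧ ∑ i, (l ^ χ i * ‖v i‖) ^ 2 = 1 := by
  obtain ⟨j, hj⟩ := hv
  set g : ℝ → ℝ := fun l => ∑ i, (l ^ χ i * ‖v i‖) ^ 2 with hg
  have hcont : Continuous g := by
    apply continuous_finset_sum
    intro i _
    exact ((continuous_pow (χ i)).mul continuous_const).pow 2
  have hvj : 0 < ‖v j‖ := norm_pos_iff.mpr hj
  set M : ℝ := max 1 (‖v j‖)⁻¹ with hM
  have hM1 : (1:ℝ) ≤ M := le_max_left _ _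
  have hMv : (1:ℝ) ≤ M * ‖v j‖ := by
    have h1 : (‖v j‖)⁻¹ ≤ M := le_max_right _ _
    calc (1:ℝ) = (‖v j‖)⁻¹ * ‖v j‖ := (inv_mul_cancel₀ hvj.ne').symm
    _ ≤ M * ‖v j‖ := by
        exact mul_le_mul_of_nonneg_right h1 hvj.le
  have hg0 : g 0 = 0 := by
    simp only [hg]
    apply Finset.sum_eq_zero
    intro i _
    rw [zero_pow (Nat.one_le_iff_ne_zero.mp (hχ i))]
    ring
  have hgM : 1 ≤ g M := by
    have hterm : (1:ℝ) ≤ (M ^ χ j * ‖v j‖) ^ 2 := by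
      have h2 : M ≤ M ^ χ j := le_self_pow₀ hM1 (Nat.one_le_iff_ne_zero.mp (hχ j))
      have h3 : (1:ℝ) ≤ M ^ χ j * ‖v j‖ :=
        le_trans hMv (mul_le_mul_of_nonneg_right h2 hvj.le)
      exact one_le_pow₀ h3
    calc (1:ℝ) ≤ (M ^ χ j * ‖v j‖) ^ 2 := hterm
    _ ≤ g M := Finset.single_le_sum (f := fun i => (M ^ χ i * ‖v i‖) ^ 2)
        (fun i _ => sq_nonneg _) (Finset.mem_univ j)
  have hsub := intermediate_value_Icc (le_trans zero_le_one hM1) hcont.continuousOn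
  have h1mem : (1:ℝ) ∈ Set.Icc (g 0) (g M) := by
    rw [hg0]; exact ⟨zero_le_one, hgM⟩
  obtain ⟨l, hlmem, hgl⟩ := hsub h1mem
  refine ⟨l, ?_, hgl⟩
  rcases hlmem.1.lt_or_eq with h | h
  · exact h
  · exfalso; rw [← h, hg0] at hgl; norm_num at hgl

lemma scale_one (χ : Fin m → ℕ) (hχ : ∀ i, 1 ≤ χ i) (c : ℝ) (hc : 0 < c)
    (a : Fin m → ℝ) (ha : ∀ i, 0 ≤ a i) (hj : ∃ j, 0 < a j)
    (h : ∑ i, (c ^ χ i * a i) ^ 2 = ∑ i, a i ^ 2) : c = 1 := by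
  obtain ⟨j, hja⟩ := hj
  rcases lt_trichotomy c 1 with hlt | heq | hgt
  · exfalso
    have hs : ∑ i, (c ^ χ i * a i) ^ 2 < ∑ i, (a i) ^ 2 := by
      apply Finset.sum_lt_sum
      · intro i _
        have h1 : c ^ χ i ≤ 1 := pow_le_one₀ hc.le hlt.le
        have h0 : 0 ≤ c ^ χ i := pow_nonneg hc.le _
        exact pow_le_pow_left₀ (mul_nonneg h0 (ha i)) (mul_le_of_le_one_left (ha i) h1) 2
      · refine ⟨j, Finset.mem_univ j, ?_⟩
        have h1 : c ^ χ j < 1 := pow_lt_one₀ hc.le hlt (Nat.one_le_iff_ne_zero.mp (hχ j))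
        have h0 : 0 ≤ c ^ χ j := pow_nonneg hc.le _
        exact pow_lt_pow_left₀ (mul_lt_of_lt_one_left hja h1)
          (mul_nonneg h0 hja.le) (by norm_num)
    linarith
  · exact heq
  · exfalso
    have hs : ∑ i, (a i) ^ 2 < ∑ i, (c ^ χ i * a i) ^ 2 := by
      apply Finset.sum_lt_sum
      · intro i _
        have h1 : 1 ≤ c ^ χ i := one_le_pow₀ hgt.le
        exact pow_le_pow_left₀ (ha i) (le_mul_of_one_le_left (ha i) h1) 2
      · refine ⟨j, Finset.mem_univ j, ?_⟩
        have h1 : 1 < c ^ χ j := one_lt_pow₀ hgt (Nat.one_le_iff_ne_zero.mp (hχ j))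
        exact pow_lt_pow_left₀ (lt_mul_of_one_lt_left hja h1) hja.le (by norm_num)
    linarith

lemma scale_one' (χ : Fin m → ℕ) (hχ : ∀ i, 1 ≤ χ i) (c : ℝ) (hc : 0 < c)
    (w w' : Sph m)
    (h : ∀ i, ‖(w' : Fin m → ℂ) i‖ = c ^ χ i * ‖(w : Fin m → ℂ) i‖) :
    c = 1 := by
  apply scale_one χ hχ c hc (fun i => ‖(w : Fin m → ℂ) i‖)
    (fun i => norm_nonneg _)
  · obtain ⟨j, hj⟩ := sph_ne_zero w
    exact ⟨j, norm_pos_iff.mpr hj⟩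
  · calc ∑ i, (c ^ χ i * ‖(w : Fin m → ℂ) i‖) ^ 2
        = ∑ i, ‖(w' : Fin m → ℂ) i‖ ^ 2 := by
          apply Finset.sum_congr rfl; intro i _; rw [h i]
    _ = 1 := w'.2
    _ = ∑ i, ‖(w : Fin m → ℂ) i‖ ^ 2 := w.2.symm

lemma root_factor (a b : ℂ) (n : ℕ) (hn : 1 ≤ n) (h : a ^ n = b ^ n) :
    ∃ ξ : ℂ, ξ ^ n = 1 ∧ a = ξ * b := by
  by_cases hb : b = 0
  · subst hb
    rw [zero_pow (Nat.one_le_iff_ne_zero.mp hn)] at h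
    refine ⟨1, one_pow n, ?_⟩
    rw [pow_eq_zero_iff (Nat.one_le_iff_ne_zero.mp hn)] at h
    simp [h]
  · refine ⟨a / b, ?_, (div_mul_cancel₀ a hb).symm⟩
    rw [div_pow, h, div_self (pow_ne_zero n hb)]

lemma abs_one_of_pow_eq_one (t : ℂ) (n : ℕ) (hn : 1 ≤ n) (h : t ^ n = 1) :
    ‖t‖ = 1 := by
  have h1 : ‖t‖ ^ n = 1 := by
    rw [← norm_pow, h, norm_one]
  rcases lt_trichotomy (‖t‖) 1 with hlt | heq | hgt
  · exfalso
    have := pow_lt_one₀ (norm_nonneg _) hlt (Nat.one_le_iff_ne_zero.mp hn)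
    rw [h1] at this; exact lt_irrefl _ this
  · exact heq
  · exfalso
    have := one_lt_pow₀ hgt (Nat.one_le_iff_ne_zero.mp hn)
    rw [h1] at this; exact lt_irrefl _ this

lemma bezout_root (p q : ℕ) (hp : 1 ≤ p) (h : Nat.gcd p q = 1) (ξ : ℂ) (hξ : ξ ^ p = 1) :
    ∃ ρ : ℂ, ρ ^ p = 1 ∧ ρ ^ q = ξ := by
  have hξ0 : ξ ≠ 0 := by
    intro h0; rw [h0, zero_pow (Nat.one_le_iff_ne_zero.mp hp)] at hξ; exact zero_ne_one hξ
  have hcop : IsCoprime (p : ℤ) (q : ℤ) := Nat.isCoprime_iff_coprime.mpr h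
  obtain ⟨a, b, hab⟩ := hcop
  have hξp : ξ ^ (p : ℤ) = 1 := by rw [zpow_natCast, hξ]
  refine ⟨ξ ^ b, ?_, ?_⟩
  · have h1 : (ξ ^ b) ^ (p : ℕ) = (ξ ^ (p : ℤ)) ^ b := by
      rw [← zpow_natCast (ξ ^ b) p, ← zpow_mul, mul_comm, zpow_mul]
    rw [h1, hξp, one_zpow]
  · have hbq : b * (q : ℤ) = 1 - a * p := by linarith
    have h2 : (ξ ^ b) ^ (q : ℕ) = ξ ^ (b * (q : ℤ)) := by
      rw [← zpow_natCast (ξ ^ b) q, ← zpow_mul]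
    have h3 : ξ ^ (a * (p : ℤ)) = 1 := by
      rw [mul_comm, zpow_mul, hξp, one_zpow]
    rw [h2, hbq, zpow_sub₀ hξ0, zpow_one, h3, div_one]

lemma wrel_equiv (χ : Fin m → ℕ) : Equivalence (wRel m χ) := by
  constructor
  · intro z
    exact ⟨1, by simp, fun i => by simp⟩
  · rintro z w ⟨t, ht, hw⟩
    have ht0 : t ≠ 0 := by
      intro h0; rw [h0] at ht; simp at ht
    refine ⟨t⁻¹, by rw [norm_inv, ht, inv_one], fun i => ?_⟩
    rw [hw i]
    rw [← mul_assoc, ← mul_pow, inv_mul_cancel₀ ht0, one_pow, one_mul]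
  · rintro z w u ⟨t, ht, hw⟩ ⟨s, hs, hu⟩
    refine ⟨s * t, by rw [norm_mul, ht, hs, mul_one], fun i => ?_⟩
    rw [hu i, hw i, mul_pow]
    ring

lemma wpMk_eq_iff (χ : Fin m → ℕ) (z w : Sph m) :
    wpMk m χ z = wpMk m χ w ↔ wRel m χ z w := by
  rw [wpMk, wpMk, Quot.eq]
  exact Equivalence.eqvGen_iff (wrel_equiv χ)


lemma sVal_eq_one (χ ω : Fin m → ℕ) (h : ∀ i, ω i ∣ χ i) : sVal m χ ω = 1 := by
  have h1 : 1 ∈ {s : ℕ | 0 < s ∧ ∀ i, ω i ∣ s * χ i} :=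
    ⟨one_pos, fun i => by rw [one_mul]; exact h i⟩
  refine le_antisymm (Nat.sInf_le h1) ?_
  exact (Nat.sInf_mem (⟨1, h1⟩ : Set.Nonempty _)).1

lemma dExp_one (χ : Fin m → ℕ) (i : Fin m) : dExp m χ (fun _ => 1) i = χ i := by
  rw [dExp, sVal_eq_one _ _ (fun i => one_dvd _), one_mul, Nat.div_one]

lemma dExp_fst (σ σ' : Fin m → ℕ) (hσ : ∀ i, 1 ≤ σ i) (i : Fin m) :
    dExp m (fun i => σ i * σ' i) σ i = σ' i := by
  rw [dExp, sVal_eq_one _ _ (fun i => dvd_mul_right _ _), one_mul,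
    Nat.mul_div_cancel_left _ (hσ i)]

lemma dExp_snd (σ σ' : Fin m → ℕ) (hσ' : ∀ i, 1 ≤ σ' i) (i : Fin m) :
    dExp m (fun i => σ i * σ' i) σ' i = σ i := by
  rw [dExp, sVal_eq_one _ _ (fun i => dvd_mul_left _ _), one_mul,
    Nat.mul_div_cancel _ (hσ' i)]

lemma emap_calc {χ ω : Fin m → ℕ} {e : WP m ω → WP m χ} (he : IsEMap m χ ω e)
    (z w : Sph m) (l : ℝ) (hl : 0 < l)
    (h : ∀ i, (w : Fin m → ℂ) i = (l : ℂ) ^ χ i * ((z : Fin m → ℂ) i) ^ dExp m χ ω i) :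
    e (wpMk m ω z) = wpMk m χ w := he.2 z w ⟨l, hl, h⟩

lemma emap_exists {χ ω : Fin m → ℕ} {e : WP m ω → WP m χ} (he : IsEMap m χ ω e)
    (hχ : ∀ i, 1 ≤ χ i) (z : Sph m) :
    ∃ (w : Sph m) (l : ℝ), 0 < l ∧
      (∀ i, (w : Fin m → ℂ) i = (l : ℂ) ^ χ i * ((z : Fin m → ℂ) i) ^ dExp m χ ω i) ∧
      e (wpMk m ω z) = wpMk m χ w := by
  obtain ⟨j, hj⟩ := sph_ne_zero z
  obtain ⟨l, hl, hsum⟩ := exists_scale χ hχ (powVec m (dExp m χ ω) z)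
    ⟨j, pow_ne_zero _ hj⟩
  have hsph : ∑ i, ‖(l : ℂ) ^ χ i * powVec m (dExp m χ ω) z i‖ ^ 2 = 1 := by
    calc ∑ i, ‖(l : ℂ) ^ χ i * powVec m (dExp m χ ω) z i‖ ^ 2
        = ∑ i, (l ^ χ i * ‖powVec m (dExp m χ ω) z i‖) ^ 2 := by
          refine Finset.sum_congr rfl (fun i _ => ?_)
          rw [norm_mul, norm_pow, Complex.norm_real, Real.norm_eq_abs, abs_of_pos hl]
    _ = 1 := hsum
  exact ⟨⟨fun i => (l : ℂ) ^ χ i * powVec m (dExp m χ ω) z i, hsph⟩, l, hl, fun i => rfl,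
    emap_calc he z _ l hl (fun i => rfl)⟩

lemma root_pre (χ : Fin m → ℕ) (hχ : ∀ i, 1 ≤ χ i) (y : Sph m) :
    ∃ (r : Sph m) (s : ℝ), 0 < s ∧
      ∀ i, (y : Fin m → ℂ) i = (s : ℂ) ^ χ i * ((r : Fin m → ℂ) i) ^ χ i := by
  have hex : ∀ i, ∃ x : ℂ, x ^ χ i = (y : Fin m → ℂ) i := fun i =>
    IsAlgClosed.exists_pow_nat_eq _ (hχ i)
  choose u hu using hex
  obtain ⟨j, hj⟩ := sph_ne_zero y
  have huj : u j ≠ 0 := by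
    intro h0
    have h1 := hu j
    rw [h0, zero_pow (Nat.one_le_iff_ne_zero.mp (hχ j))] at h1
    exact hj h1.symm
  set S : ℝ := ∑ i, ‖u i‖ ^ 2 with hS
  have hS0 : 0 < S := by
    apply Finset.sum_pos' (fun i _ => sq_nonneg _)
    exact ⟨j, Finset.mem_univ j, pow_pos (norm_pos_iff.mpr huj) 2⟩
  set s : ℝ := Real.sqrt S with hsdef
  have hs0 : 0 < s := Real.sqrt_pos.mpr hS0
  have hsC : (s : ℂ) ≠ 0 := by
    simpa using hs0.ne'
  have hsph : ∑ i, ‖u i / (s : ℂ)‖ ^ 2 = 1 := by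
    have heq : ∀ i, ‖u i / (s : ℂ)‖ ^ 2 = ‖u i‖ ^ 2 / S := by
      intro i
      rw [norm_div, Complex.norm_real, Real.norm_eq_abs, abs_of_pos hs0, div_pow, Real.sq_sqrt hS0.le]
    rw [Finset.sum_congr rfl (fun i _ => heq i), ← Finset.sum_div, div_self hS0.ne']
  refine ⟨⟨fun i => u i / (s : ℂ), hsph⟩, s, hs0, fun i => ?_⟩
  show (y : Fin m → ℂ) i = (s : ℂ) ^ χ i * (u i / (s : ℂ)) ^ χ i
  rw [div_pow, ← hu i]
  field_simp


-- ## Topology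

lemma continuous_sumsq : Continuous (fun z : Fin m → ℂ => ∑ i, ‖z i‖ ^ 2) := by
  apply continuous_finset_sum
  intro i _
  exact (continuous_norm.comp (continuous_apply i)).pow 2

lemma isCompact_sphSet : IsCompact {z : Fin m → ℂ | ∑ i, ‖z i‖ ^ 2 = 1} := by
  apply Metric.isCompact_of_isClosed_isBounded
  · exact isClosed_eq continuous_sumsq continuous_const
  · rw [Metric.isBounded_iff_subset_closedBall 0]
    refine ⟨1, fun z hz => ?_⟩
    simp only [Metric.mem_closedBall, dist_zero_right]
    rw [pi_norm_le_iff_of_nonneg zero_le_one]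
    intro i
    have h1 : ‖z i‖ ^ 2 ≤ 1 := by
      rw [← hz]
      exact Finset.single_le_sum (f := fun i => ‖z i‖ ^ 2)
        (fun i _ => sq_nonneg _) (Finset.mem_univ i)
    have h2 : (0:ℝ) ≤ ‖z i‖ := norm_nonneg _
    show ‖z i‖ ≤ 1
    nlinarith

instance : CompactSpace (Sph m) :=
  isCompact_iff_compactSpace.mp isCompact_sphSet

lemma compactSpace_quot {X : Type*} [TopologicalSpace X] [CompactSpace X]
    (r : X → X → Prop) : CompactSpace (Quot r) := by
  constructor
  have h1 : IsCompact (Set.range (Quot.mk r)) := isCompact_range continuous_quot_mk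
  rwa [Set.range_eq_univ.mpr (fun q => Quot.exists_rep q)] at h1

abbrev Circ : Type := {t : ℂ // ‖t‖ = 1}

instance : CompactSpace Circ := by
  have h1 : {t : ℂ | ‖t‖ = 1} = Metric.sphere 0 1 := by
    ext t
    simp [Complex.dist_eq]
  have h2 : IsCompact {t : ℂ | ‖t‖ = 1} := h1 ▸ isCompact_sphere 0 1
  exact isCompact_iff_compactSpace.mp h2

def act (χ : Fin m → ℕ) (t : Circ) (z : Sph m) : Sph m :=
  ⟨fun i => (t : ℂ) ^ χ i * (z : Fin m → ℂ) i, by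
    have h1 : ∀ i, ‖(t : ℂ) ^ χ i * (z : Fin m → ℂ) i‖ ^ 2
        = ‖(z : Fin m → ℂ) i‖ ^ 2 := by
      intro i
      rw [norm_mul, norm_pow, t.2, one_pow, one_mul]
    rw [Finset.sum_congr rfl (fun i _ => h1 i)]
    exact z.2⟩

lemma continuous_act (χ : Fin m → ℕ) :
    Continuous (fun q : Sph m × Circ => act χ q.2 q.1) := by
  apply Continuous.subtype_mk
  apply continuous_pi
  intro i
  exact ((continuous_subtype_val.comp continuous_snd).pow (χ i)).mul
    ((continuous_apply i).comp (continuous_subtype_val.comp continuous_fst))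

lemma wrel_iff_act (χ : Fin m → ℕ) (z w : Sph m) :
    wRel m χ z w ↔ ∃ t : Circ, w = act χ t z := by
  constructor
  · rintro ⟨t, ht, hw⟩
    exact ⟨⟨t, ht⟩, Subtype.ext (funext fun i => hw i)⟩
  · rintro ⟨t, rfl⟩
    exact ⟨t, t.2, fun i => rfl⟩

lemma isOpenMap_wpMk (χ : Fin m → ℕ) : IsOpenMap (Quot.mk (wRel m χ)) := by
  intro U hU
  rw [isOpen_coinduced (f := Quot.mk (wRel m χ))]
  have hset : Quot.mk (wRel m χ) ⁻¹' (Quot.mk (wRel m χ) '' U)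
      = ⋃ t : Circ, (fun z => act χ t z) ⁻¹' U := by
    ext z
    simp only [Set.mem_preimage, Set.mem_image, Set.mem_iUnion]
    constructor
    · rintro ⟨u, hu, hq⟩
      have hr : wRel m χ z u :=
        (wrel_equiv χ).symm (((wrel_equiv χ).eqvGen_iff).mp (Quot.eq.mp hq))
      obtain ⟨t, ht⟩ := (wrel_iff_act χ z u).mp hr
      exact ⟨t, ht ▸ hu⟩
    · rintro ⟨t, ht⟩
      refine ⟨act χ t z, ht, ?_⟩
      exact (Quot.sound ((wrel_iff_act χ z (act χ t z)).mpr ⟨t, rfl⟩)).symm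
  rw [hset]
  exact isOpen_iUnion fun t => hU.preimage ((continuous_act χ).comp
    (Continuous.prodMk_left t))

lemma isClosed_wrel (χ : Fin m → ℕ) :
    IsClosed {p : Sph m × Sph m | wRel m χ p.1 p.2} := by
  have himg : {p : Sph m × Sph m | wRel m χ p.1 p.2}
      = Set.range (fun q : Sph m × Circ => (q.1, act χ q.2 q.1)) := by
    ext ⟨z, w⟩
    simp only [Set.mem_setOf_eq, Set.mem_range, Prod.mk.injEq, Prod.exists]
    rw [wrel_iff_act]
    constructor
    · rintro ⟨t, rfl⟩; exact ⟨z, t, rfl, rfl⟩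
    · rintro ⟨z', t, rfl, rfl⟩; exact ⟨t, rfl⟩
  rw [himg]
  have hc : IsCompact (Set.range (fun q : Sph m × Circ => (q.1, act χ q.2 q.1))) :=
    isCompact_range (continuous_fst.prodMk (continuous_act χ))
  exact hc.isClosed

lemma t2_wp (χ : Fin m → ℕ) : T2Space (WP m χ) := by
  constructor
  intro a b hab
  induction a using Quot.ind with | _ z =>
  induction b using Quot.ind with | _ w =>
  have hzw : ¬ wRel m χ z w := fun h => hab (Quot.sound h)
  have hopen : IsOpen {p : Sph m × Sph m | wRel m χ p.1 p.2}ᶜ :=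
    (isClosed_wrel χ).isOpen_compl
  obtain ⟨U, V, hU, hV, hzU, hwV, hUV⟩ := isOpen_prod_iff.mp hopen z w hzw
  refine ⟨Quot.mk _ '' U, Quot.mk _ '' V, isOpenMap_wpMk χ U hU, isOpenMap_wpMk χ V hV,
    ⟨z, hzU, rfl⟩, ⟨w, hwV, rfl⟩, ?_⟩
  rw [Set.disjoint_left]
  rintro q ⟨u, hu, rfl⟩ ⟨v, hv, hvq⟩
  have hr : wRel m χ u v := ((wrel_equiv χ).eqvGen_iff).mp (Quot.eq.mp hvq.symm)
  exact hUV (Set.mk_mem_prod hu hv) hr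

end S9

open S9 in
/-- For coprime weight vectors `σ, σ'` with coordinatewise product `σσ'`,
let `R` be the quotient of `P(σ') ⊔ P(σ)` by the equivalence relation generated by
`e(σ'/1)(z) ∼ e(σ/1)(z)` for `z ∈ ℂP^n`. Then the map `R → P(σσ')` induced by
`e(σσ'/σ')` and `e(σσ'/σ)` is well defined and a homeomorphism; i.e. the square of
`e`-maps is a pushout square of topological spaces. -/
theorem statement9 (n : ℕ) (hn : 1 ≤ n) (σ σ' : Fin (n + 1) → ℕ)
    (hσ : ∀ i, 1 ≤ σ i) (hσ' : ∀ i, 1 ≤ σ' i)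
    (hcop : ∀ i j, Nat.gcd (σ i) (σ' j) = 1)
    (i1 : WP (n + 1) (fun _ => 1) → WP (n + 1) σ')
    (hi1 : IsEMap (n + 1) σ' (fun _ => 1) i1)
    (i2 : WP (n + 1) (fun _ => 1) → WP (n + 1) σ)
    (hi2 : IsEMap (n + 1) σ (fun _ => 1) i2)
    (f' : WP (n + 1) σ' → WP (n + 1) (fun i => σ i * σ' i))
    (hf' : IsEMap (n + 1) (fun i => σ i * σ' i) σ' f')
    (f : WP (n + 1) σ → WP (n + 1) (fun i => σ i * σ' i))
    (hf : IsEMap (n + 1) (fun i => σ i * σ' i) σ f) :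
    ∃ F : Quot (fun a b : WP (n + 1) σ' ⊕ WP (n + 1) σ =>
        ∃ z : WP (n + 1) (fun _ => 1), a = Sum.inl (i1 z) ∧ b = Sum.inr (i2 z)) ≃ₜ
        WP (n + 1) (fun i => σ i * σ' i),
      (∀ x : WP (n + 1) σ', F (Quot.mk _ (Sum.inl x)) = f' x) ∧
      (∀ y : WP (n + 1) σ, F (Quot.mk _ (Sum.inr y)) = f y) := by

  have hτ : ∀ i, 1 ≤ (fun i => σ i * σ' i) i := fun i => Nat.one_le_iff_ne_zero.mpr
    (Nat.mul_ne_zero (Nat.one_le_iff_ne_zero.mp (hσ i)) (Nat.one_le_iff_ne_zero.mp (hσ' i)))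
  have d1 : ∀ i, dExp (n + 1) σ' (fun _ => 1) i = σ' i := dExp_one σ'
  have d1' : ∀ i, dExp (n + 1) σ (fun _ => 1) i = σ i := dExp_one σ
  have df : ∀ i, dExp (n + 1) (fun i => σ i * σ' i) σ i = σ' i := dExp_fst σ σ' hσ
  have df' : ∀ i, dExp (n + 1) (fun i => σ i * σ' i) σ' i = σ i := dExp_snd σ σ' hσ'
  -- the glue identity
  have key : ∀ z : WP (n + 1) (fun _ => 1), f' (i1 z) = f (i2 z) := by
    intro z
    induction z using Quot.ind with | _ z0 =>
    obtain ⟨p, κ, hκ, hp, hip⟩ := emap_exists hi1 hσ' z0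
    obtain ⟨w, l, hl, hw, hfw⟩ := emap_exists hf' hτ p
    obtain ⟨p2, κ2, hκ2, hp2, hip2⟩ := emap_exists hi2 hσ z0
    obtain ⟨w2, l2, hl2, hw2, hfw2⟩ := emap_exists hf hτ p2
    have hwz : ∀ i, (w : Fin (n + 1) → ℂ) i
        = ((l * κ : ℝ) : ℂ) ^ (σ i * σ' i) * ((z0 : Fin (n + 1) → ℂ) i) ^ (σ i * σ' i) := by
      intro i
      rw [hw i, df' i, hp i, d1 i, mul_pow, ← pow_mul, ← pow_mul, mul_comm (σ' i) (σ i)]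
      push_cast
      ring
    have hwz2 : ∀ i, (w2 : Fin (n + 1) → ℂ) i
        = ((l2 * κ2 : ℝ) : ℂ) ^ (σ i * σ' i) * ((z0 : Fin (n + 1) → ℂ) i) ^ (σ i * σ' i) := by
      intro i
      rw [hw2 i, df i, hp2 i, d1' i, mul_pow, ← pow_mul, ← pow_mul, mul_comm (σ i) (σ' i)]
      push_cast
      ring
    have hpos : (0:ℝ) < l * κ := mul_pos hl hκ
    have hpos2 : (0:ℝ) < l2 * κ2 := mul_pos hl2 hκ2
    have hcpos : 0 < (l2 * κ2) / (l * κ) := div_pos hpos2 hpos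
    have habs : ∀ i, ‖(w2 : Fin (n + 1) → ℂ) i‖
        = ((l2 * κ2) / (l * κ)) ^ (σ i * σ' i) * ‖(w : Fin (n + 1) → ℂ) i‖ := by
      intro i
      rw [hwz i, hwz2 i]
      simp only [norm_mul, norm_pow, Complex.norm_real, Real.norm_eq_abs]
      rw [abs_of_pos hl, abs_of_pos hκ, abs_of_pos hl2, abs_of_pos hκ2, div_pow]
      field_simp
    have hc1 : (l2 * κ2) / (l * κ) = 1 :=
      scale_one' (fun i => σ i * σ' i) hτ _ hcpos w w2 habs
    have hlk : l2 * κ2 = l * κ := by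
      field_simp at hc1
      exact hc1
    have hww : w2 = w := Subtype.ext (funext fun i => by rw [hwz i, hwz2 i, hlk])
    show f' (i1 (wpMk (n + 1) (fun _ => 1) z0)) = f (i2 (wpMk (n + 1) (fun _ => 1) z0))
    rw [hip, hfw, hip2, hfw2, hww]
  -- the pushout relation
  let Rl : (WP (n + 1) σ' ⊕ WP (n + 1) σ) → (WP (n + 1) σ' ⊕ WP (n + 1) σ) → Prop :=
    fun a b => ∃ z : WP (n + 1) (fun _ => 1), a = Sum.inl (i1 z) ∧ b = Sum.inr (i2 z)
  have hresp : ∀ a b, Rl a b → Sum.elim f' f a = Sum.elim f' f b := by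
    rintro a b ⟨z, rfl, rfl⟩
    exact key z
  let Fmap : Quot Rl → WP (n + 1) (fun i => σ i * σ' i) := Quot.lift (Sum.elim f' f) hresp
  have hcont : Continuous Fmap := continuous_quot_lift _ (hf'.1.sumElim hf.1)
  -- the key gluing lemma: multiplying by σ-th roots of unity does not change the class in R
  have L : ∀ (y yξ : Sph (n + 1)) (ξ : Fin (n + 1) → ℂ), (∀ i, ξ i ^ σ i = 1) →
      (∀ i, (yξ : Fin (n + 1) → ℂ) i = ξ i * (y : Fin (n + 1) → ℂ) i) →
      Quot.mk Rl (Sum.inl (wpMk (n + 1) σ' yξ)) = Quot.mk Rl (Sum.inl (wpMk (n + 1) σ' y)) := by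
    intro y yξ ξ hξ hyξ
    have hρex : ∀ i, ∃ ρ : ℂ, ρ ^ σ i = 1 ∧ ρ ^ σ' i = ξ i := fun i =>
      bezout_root (σ i) (σ' i) (hσ i) (hcop i i) (ξ i) (hξ i)
    choose ρ hρ1 hρ2 using hρex
    obtain ⟨r, s, hs, hr⟩ := root_pre σ' hσ' y
    have hρabs : ∀ i, ‖ρ i‖ = 1 := fun i =>
      abs_one_of_pow_eq_one _ _ (hσ i) (hρ1 i)
    have hr'sph : ∑ i, ‖ρ i * (r : Fin (n + 1) → ℂ) i‖ ^ 2 = 1 := by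
      have hco : ∀ i, ‖ρ i * (r : Fin (n + 1) → ℂ) i‖ ^ 2
          = ‖(r : Fin (n + 1) → ℂ) i‖ ^ 2 := by
        intro i; rw [norm_mul, hρabs i, one_mul]
      rw [Finset.sum_congr rfl fun i _ => hco i]
      exact r.2
    set r' : Sph (n + 1) := ⟨fun i => ρ i * (r : Fin (n + 1) → ℂ) i, hr'sph⟩ with hr'def
    have h1 : i1 (wpMk (n + 1) (fun _ => 1) r) = wpMk (n + 1) σ' y :=
      emap_calc hi1 r y s hs (fun i => by rw [d1 i]; exact hr i)
    have h2 : i1 (wpMk (n + 1) (fun _ => 1) r') = wpMk (n + 1) σ' yξ := by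
      apply emap_calc hi1 r' yξ s hs
      intro i
      rw [d1 i]
      show (yξ : Fin (n + 1) → ℂ) i
        = (s : ℂ) ^ σ' i * (ρ i * (r : Fin (n + 1) → ℂ) i) ^ σ' i
      rw [hyξ i, mul_pow, hρ2 i, hr i]
      ring
    obtain ⟨w2, κ, hκ, hw2, hi2r⟩ := emap_exists hi2 hσ r
    have h3 : i2 (wpMk (n + 1) (fun _ => 1) r') = wpMk (n + 1) σ w2 := by
      apply emap_calc hi2 r' w2 κ hκ
      intro i
      rw [d1' i]
      show (w2 : Fin (n + 1) → ℂ) i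
        = (κ : ℂ) ^ σ i * (ρ i * (r : Fin (n + 1) → ℂ) i) ^ σ i
      rw [mul_pow, hρ1 i, one_mul, hw2 i, d1' i]
    calc Quot.mk Rl (Sum.inl (wpMk (n + 1) σ' yξ))
        = Quot.mk Rl (Sum.inl (i1 (wpMk (n + 1) (fun _ => 1) r'))) := by rw [h2]
      _ = Quot.mk Rl (Sum.inr (i2 (wpMk (n + 1) (fun _ => 1) r'))) :=
          Quot.sound ⟨wpMk (n + 1) (fun _ => 1) r', rfl, rfl⟩
      _ = Quot.mk Rl (Sum.inr (wpMk (n + 1) σ w2)) := by rw [h3]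
      _ = Quot.mk Rl (Sum.inr (i2 (wpMk (n + 1) (fun _ => 1) r))) := by rw [hi2r]
      _ = Quot.mk Rl (Sum.inl (i1 (wpMk (n + 1) (fun _ => 1) r))) :=
          (Quot.sound ⟨wpMk (n + 1) (fun _ => 1) r, rfl, rfl⟩).symm
      _ = Quot.mk Rl (Sum.inl (wpMk (n + 1) σ' y)) := by rw [h1]
  -- every class of the pushout comes from P(σ')
  have red : ∀ a : Quot Rl, ∃ x : Sph (n + 1),
      a = Quot.mk Rl (Sum.inl (wpMk (n + 1) σ' x)) := by
    intro a
    induction a using Quot.ind with | _ ab =>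
    cases ab with
    | inl x =>
      induction x using Quot.ind with | _ x0 =>
      exact ⟨x0, rfl⟩
    | inr y =>
      induction y using Quot.ind with | _ y0 =>
      obtain ⟨r, s, hs, hr⟩ := root_pre σ hσ y0
      have h1 : i2 (wpMk (n + 1) (fun _ => 1) r) = wpMk (n + 1) σ y0 :=
        emap_calc hi2 r y0 s hs (fun i => by rw [d1' i]; exact hr i)
      obtain ⟨p, κ, hκ, hp, hi1r⟩ := emap_exists hi1 hσ' r
      refine ⟨p, ?_⟩
      show Quot.mk Rl (Sum.inr (wpMk (n + 1) σ y0)) = _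
      calc Quot.mk Rl (Sum.inr (wpMk (n + 1) σ y0))
          = Quot.mk Rl (Sum.inr (i2 (wpMk (n + 1) (fun _ => 1) r))) := by rw [h1]
        _ = Quot.mk Rl (Sum.inl (i1 (wpMk (n + 1) (fun _ => 1) r))) :=
            (Quot.sound ⟨wpMk (n + 1) (fun _ => 1) r, rfl, rfl⟩).symm
        _ = Quot.mk Rl (Sum.inl (wpMk (n + 1) σ' p)) := by rw [hi1r]
  -- surjectivity
  have hsurj : Function.Surjective Fmap := by
    intro b
    induction b using Quot.ind with | _ w =>
    obtain ⟨r, s, hs, hr⟩ := root_pre (fun i => σ i * σ' i) hτ w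
    obtain ⟨p, κ, hκ, hp, hi1r⟩ := emap_exists hi1 hσ' r
    have hκC : ((κ : ℝ) : ℂ) ≠ 0 := by exact_mod_cast hκ.ne'
    have hcalc : f' (wpMk (n + 1) σ' p) = wpMk (n + 1) (fun i => σ i * σ' i) w := by
      apply emap_calc hf' p w (s / κ) (div_pos hs hκ)
      intro i
      rw [df' i, hp i, d1 i, mul_pow, ← pow_mul, ← pow_mul, hr i,
        mul_comm (σ' i) (σ i)]
      push_cast
      linear_combination (-(((s : ℝ) : ℂ) ^ (σ i * σ' i) * (r : Fin (n + 1) → ℂ) i ^ (σ i * σ' i))) *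
        mul_inv_cancel₀ (pow_ne_zero (σ i * σ' i) hκC)
    refine ⟨Quot.mk Rl (Sum.inl (i1 (wpMk (n + 1) (fun _ => 1) r))), ?_⟩
    rw [show Fmap (Quot.mk Rl (Sum.inl (i1 (wpMk (n + 1) (fun _ => 1) r))))
        = f' (i1 (wpMk (n + 1) (fun _ => 1) r)) from rfl, hi1r, hcalc]
    rfl
  -- injectivity
  have hinj : Function.Injective Fmap := by
    intro a b hab
    obtain ⟨x, rfl⟩ := red a
    obtain ⟨x', rfl⟩ := red b
    obtain ⟨w, l, hl, hw, hfw⟩ := emap_exists hf' hτ x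
    obtain ⟨w', l', hl', hw', hfw'⟩ := emap_exists hf' hτ x'
    have hab2 : wpMk (n + 1) (fun i => σ i * σ' i) w
        = wpMk (n + 1) (fun i => σ i * σ' i) w' := by
      rw [← hfw, ← hfw']
      exact hab
    obtain ⟨t, ht, htw⟩ := (wpMk_eq_iff _ _ _).mp hab2
    have htC : t ≠ 0 := by
      intro h0; rw [h0] at ht; simp at ht
    have hl'C : ((l' : ℝ) : ℂ) ≠ 0 := by exact_mod_cast hl'.ne'
    have hkey : ∀ i, ∃ ξ : ℂ, ξ ^ σ i = 1 ∧
        ((l' : ℝ) : ℂ) ^ σ' i * (x' : Fin (n + 1) → ℂ) i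
          = ξ * (t ^ σ' i * ((l : ℝ) : ℂ) ^ σ' i * (x : Fin (n + 1) → ℂ) i) := by
      intro i
      apply root_factor _ _ (σ i) (hσ i)
      have h1 := htw i
      rw [hw i, hw' i, df' i] at h1
      rw [mul_pow, mul_pow, mul_pow, ← pow_mul, ← pow_mul, ← pow_mul,
        mul_comm (σ' i) (σ i)]
      linear_combination h1
    choose ξ hξ1 hξ2 using hkey
    have hξabs : ∀ i, ‖ξ i‖ = 1 := fun i =>
      abs_one_of_pow_eq_one _ _ (hσ i) (hξ1 i)
    have hcpos : (0:ℝ) < l / l' := div_pos hl hl'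
    have hx' : ∀ i, (x' : Fin (n + 1) → ℂ) i
        = ξ i * t ^ σ' i * ((l / l' : ℝ) : ℂ) ^ σ' i * (x : Fin (n + 1) → ℂ) i := by
      intro i
      have h2 := hξ2 i
      push_cast
      linear_combination ((l' : ℝ) : ℂ)⁻¹ ^ σ' i * h2 -
        (x' : Fin (n + 1) → ℂ) i * mul_inv_cancel₀ (pow_ne_zero (σ' i) hl'C)
    have habs : ∀ i, ‖(x' : Fin (n + 1) → ℂ) i‖
        = (l / l') ^ σ' i * ‖(x : Fin (n + 1) → ℂ) i‖ := by
      intro i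
      rw [hx' i]
      simp only [norm_mul, norm_pow, Complex.norm_real, Real.norm_eq_abs, hξabs i, ht]
      rw [abs_of_pos hcpos, one_mul, one_pow, one_mul]
    have hc1 : l / l' = 1 := scale_one' σ' hσ' _ hcpos x x' habs
    have hxξsph : ∑ i, ‖ξ i * (x : Fin (n + 1) → ℂ) i‖ ^ 2 = 1 := by
      have hco : ∀ i, ‖ξ i * (x : Fin (n + 1) → ℂ) i‖ ^ 2
          = ‖(x : Fin (n + 1) → ℂ) i‖ ^ 2 := by
        intro i; rw [norm_mul, hξabs i, one_mul]
      rw [Finset.sum_congr rfl fun i _ => hco i]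
      exact x.2
    set xξ : Sph (n + 1) := ⟨fun i => ξ i * (x : Fin (n + 1) → ℂ) i, hxξsph⟩ with hxξdef
    have hx'xi : wpMk (n + 1) σ' xξ = wpMk (n + 1) σ' x' := by
      apply Quot.sound
      refine ⟨t, ht, fun i => ?_⟩
      show (x' : Fin (n + 1) → ℂ) i = t ^ σ' i * (ξ i * (x : Fin (n + 1) → ℂ) i)
      rw [hx' i, hc1]
      push_cast
      ring
    rw [← hx'xi]
    exact (L x xξ ξ hξ1 (fun i => rfl)).symm
  -- assembly
  haveI : CompactSpace (WP (n + 1) σ') := compactSpace_quot _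
  haveI : CompactSpace (WP (n + 1) σ) := compactSpace_quot _
  haveI : CompactSpace (Quot Rl) := compactSpace_quot _
  haveI : T2Space (WP (n + 1) (fun i => σ i * σ' i)) := t2_wp _
  let E : Quot Rl ≃ WP (n + 1) (fun i => σ i * σ' i) := Equiv.ofBijective Fmap ⟨hinj, hsurj⟩
  have hcontE : Continuous E := hcont
  exact ⟨Continuous.homeoOfEquivCompactToT2 (f := E) hcontE, fun x => rfl, fun y => rfl⟩
end
end

section
/- Let χ be a weight vector and let Q(χ) = {p_1, …, p_m} be the set of primes dividing at least one coordinate χ_i, with p-contents (p_i)χ. Then the map F : P(χ) → ∏_{i=1}^{m} P((p_i)χ) whose i-th component is e((p_i)χ/χ) is a homeomorphism onto the subspace {(z_1, …, z_m) : e(1/(p_1)χ)(z_1) = e(1/(p_2)χ)(z_2) = … = e(1/(p_m)χ)(z_m) in ℂP^n}, with the subspace topology of the product. That is, P(χ), together with the maps e((p_i)χ/χ), is the limit of the diagram of maps e(1/(p_i)χ) : P((p_i)χ) → ℂP^n. -/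
noncomputable section

/-- The set `Q(χ)` of primes dividing at least one coordinate of `χ`, as a type. -/
abbrev PrimesOf (m : ℕ) (χ : Fin m → ℕ) : Type := {p : ℕ // p.Prime ∧ ∃ i, p ∣ χ i}

/-- The `p`-content of `χ`: the weight vector `(p^{a_0}, …, p^{a_n})` where `p^{a_i}`
is the exact power of `p` dividing `χ_i`. -/
def pCont (m : ℕ) (p : ℕ) (χ : Fin m → ℕ) : Fin m → ℕ :=
  fun i => p ^ (χ i).factorization p

namespace St10

open Complex Finset

/-! ### The circle exponential -/

def ee (x : ℝ) : ℂ := Complex.exp (x * (2 * Real.pi * Complex.I))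

lemma abs_ee (x : ℝ) : ‖ee x‖ = 1 := by
  rw [ee, Complex.norm_exp]
  simp

lemma ee_add (x y : ℝ) : ee (x + y) = ee x * ee y := by
  rw [ee, ee, ee, ← Complex.exp_add]
  congr 1
  push_cast
  ring

lemma ee_int (k : ℤ) : ee k = 1 := by
  have := Complex.exp_int_mul_two_pi_mul_I k
  rw [ee]
  exact_mod_cast this

lemma ee_eq_one_iff (x : ℝ) : ee x = 1 ↔ ∃ k : ℤ, x = k := by
  constructor
  · intro h
    rw [ee, Complex.exp_eq_one_iff] at h
    obtain ⟨k, hk⟩ := h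
    refine ⟨k, ?_⟩
    have h2 : (2 * Real.pi * Complex.I) ≠ 0 := by
      simp [Real.pi_ne_zero, Complex.I_ne_zero]
    have := mul_right_cancel₀ h2 hk
    exact_mod_cast this
  · rintro ⟨k, rfl⟩; exact ee_int k

lemma ee_pow (x : ℝ) (d : ℕ) : ee x ^ d = ee (d * x) := by
  rw [ee, ee, ← Complex.exp_nat_mul]
  push_cast
  ring_nf

lemma exists_ee {u : ℂ} (hu : ‖u‖ = 1) : ∃ x : ℝ, u = ee x := by
  refine ⟨u.arg / (2 * Real.pi), ?_⟩
  have h1 := Complex.norm_mul_exp_arg_mul_I u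
  rw [hu] at h1
  have hπ : (Real.pi : ℝ) ≠ 0 := Real.pi_ne_zero
  have hπc : (Real.pi : ℂ) ≠ 0 := by exact_mod_cast hπ
  have h2 : ((u.arg / (2 * Real.pi) : ℝ) : ℂ) * (2 * Real.pi * Complex.I)
      = u.arg * Complex.I := by
    push_cast
    field_simp
  norm_num at h1
  rw [ee, h2]
  exact h1.symm

/-! ### Real power sums -/

lemma sumpow_lt {m : ℕ} {e : Fin m → ℕ} (he : ∀ i, 1 ≤ e i) {b : Fin m → ℝ}
    (hb : ∀ i, 0 ≤ b i) {j : Fin m} (hj : 0 < b j) {x y : ℝ} (hx : 0 ≤ x) (hxy : x < y) :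
    ∑ i, x ^ e i * b i < ∑ i, y ^ e i * b i := by
  apply Finset.sum_lt_sum
  · exact fun i _ => mul_le_mul_of_nonneg_right (pow_le_pow_left₀ hx hxy.le _) (hb i)
  · exact ⟨j, Finset.mem_univ j,
      mul_lt_mul_of_pos_right (pow_lt_pow_left₀ hxy hx (Nat.one_le_iff_ne_zero.mp (he j))) hj⟩

lemma sumpow_rigid {m : ℕ} {e : Fin m → ℕ} (he : ∀ i, 1 ≤ e i) {b : Fin m → ℝ}
    (hb : ∀ i, 0 ≤ b i) {j : Fin m} (hj : 0 < b j) {x : ℝ} (hx : 0 ≤ x)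
    (h1 : ∑ i, x ^ e i * b i = ∑ i, b i) : x = 1 := by
  rcases lt_trichotomy x 1 with h | h | h
  · exfalso
    have := sumpow_lt he hb hj hx h
    simp only [one_pow, one_mul] at this
    linarith
  · exact h
  · exfalso
    have := sumpow_lt he hb hj (by norm_num : (0:ℝ) ≤ 1) h
    simp only [one_pow, one_mul] at this
    linarith

lemma sumpow_exists {m : ℕ} {e : Fin m → ℕ} (he : ∀ i, 1 ≤ e i) {b : Fin m → ℝ}
    (hb : ∀ i, 0 ≤ b i) {j : Fin m} (hj : 0 < b j) :
    ∃ l : ℝ, 0 < l ∧ ∑ i, l ^ e i * b i = 1 := by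
  set f : ℝ → ℝ := fun l => ∑ i, l ^ e i * b i with hf
  have hcont : Continuous f := by
    apply continuous_finset_sum
    exact fun i _ => (continuous_pow (e i)).mul continuous_const
  set C : ℝ := max 1 (1 / b j) with hC
  have hC1 : (1:ℝ) ≤ C := le_max_left _ _
  have hC0 : (0:ℝ) ≤ C := by linarith
  have hfC : 1 ≤ f C := by
    have h1 : C ^ e j * b j ≤ f C := by
      apply Finset.single_le_sum (f := fun i => C ^ e i * b i)
      · exact fun i _ => mul_nonneg (pow_nonneg hC0 _) (hb i)
      · exact Finset.mem_univ j
    have h2 : (1:ℝ) ≤ C * b j :=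
      (div_le_iff₀ hj).mp (le_max_right 1 (1 / b j))
    have h4 : C ≤ C ^ e j := by
      calc C = C ^ 1 := (pow_one C).symm
        _ ≤ C ^ e j := pow_le_pow_right₀ hC1 (he j)
    have h3 : C * b j ≤ C ^ e j * b j := mul_le_mul_of_nonneg_right h4 (hb j)
    linarith
  have hf0 : f 0 = 0 := by
    simp only [hf]
    apply Finset.sum_eq_zero
    intro i _
    rw [zero_pow (Nat.one_le_iff_ne_zero.mp (he i)), zero_mul]
  have : (1:ℝ) ∈ Set.Icc (f 0) (f C) := by
    rw [hf0]; exact ⟨by norm_num, hfC⟩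
  obtain ⟨l, hl, hfl⟩ := intermediate_value_Icc hC0 hcont.continuousOn this
  refine ⟨l, ?_, hfl⟩
  rcases hl.1.eq_or_lt with h | h
  · exfalso; rw [← h] at hfl; rw [hf0] at hfl; norm_num at hfl
  · exact h

/-! ### Sphere and normalisation -/

lemma sph_exists_ne {m : ℕ} (z : Sph m) : ∃ j, (z : Fin m → ℂ) j ≠ 0 := by
  by_contra h
  push_neg at h
  have h2 := z.2
  simp only [h, norm_zero] at h2
  simp at h2

lemma exists_isNorm {m : ℕ} (χ : Fin m → ℕ) (hχ : ∀ i, 1 ≤ χ i) (v : Fin m → ℂ)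
    (j : Fin m) (hv : v j ≠ 0) : ∃ w : Sph m, IsNorm m χ v w := by
  have hb : ∀ i, 0 ≤ ‖v i‖ ^ 2 := fun i => sq_nonneg _
  have hj : 0 < ‖v j‖ ^ 2 := by
    have := norm_pos_iff.mpr hv
    positivity
  have he : ∀ i, 1 ≤ 2 * χ i := fun i => le_trans (hχ i) (Nat.le_mul_of_pos_left _ (by norm_num))
  obtain ⟨l, hl, hsum⟩ := sumpow_exists (e := fun i => 2 * χ i) he hb hj
  refine ⟨⟨fun i => (l : ℂ) ^ χ i * v i, ?_⟩, l, hl, fun i => rfl⟩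
  have habs : ∀ i, ‖(l : ℂ) ^ χ i * v i‖ ^ 2
      = l ^ (2 * χ i) * ‖v i‖ ^ 2 := by
    intro i
    rw [norm_mul, norm_pow, Complex.norm_real, Real.norm_eq_abs, abs_of_pos hl, mul_pow, ← pow_mul,
      mul_comm (χ i) 2]
  simp only [habs]
  exact hsum

/-! ### The relation is an equivalence -/

lemma wRel_equiv (m : ℕ) (χ : Fin m → ℕ) : Equivalence (wRel m χ) := by
  constructor
  · intro z
    exact ⟨1, by simp, fun i => by simp⟩
  · rintro z w ⟨t, ht, h⟩
    have ht0 : t ≠ 0 := by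
      intro h0
      rw [h0] at ht
      simp at ht
    refine ⟨t⁻¹, by rw [norm_inv, ht]; norm_num, fun i => ?_⟩
    rw [h i, inv_pow]
    field_simp
  · rintro z w v ⟨t, ht, h⟩ ⟨s, hs, h'⟩
    refine ⟨s * t, by rw [norm_mul, ht, hs]; norm_num, fun i => ?_⟩
    rw [h' i, h i, mul_pow]
    ring

lemma wp_eq_iff {m : ℕ} {χ : Fin m → ℕ} (z w : Sph m) :
    wpMk m χ z = wpMk m χ w ↔ wRel m χ z w := by
  rw [wpMk, wpMk, Quot.eq]
  exact (wRel_equiv m χ).eqvGen_iff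

/-! ### Topology -/

instance sphCompact (m : ℕ) : CompactSpace (Sph m) := by
  suffices h : IsCompact {z : Fin m → ℂ | ∑ i, ‖z i‖ ^ 2 = 1} by
    exact isCompact_iff_compactSpace.mp h
  have hcl : IsClosed {z : Fin m → ℂ | ∑ i, ‖z i‖ ^ 2 = 1} := by
    apply isClosed_eq _ continuous_const
    exact continuous_finset_sum _ fun i _ =>
      (continuous_norm.comp (continuous_apply i)).pow 2
  apply (isCompact_closedBall (0 : Fin m → ℂ) 1).of_isClosed_subset hcl
  intro z hz
  rw [Metric.mem_closedBall, dist_pi_le_iff (by norm_num : (0:ℝ) ≤ 1)]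
  intro i
  have : (0 : Fin m → ℂ) i = 0 := rfl
  rw [this, dist_zero_right]
  have h1 : ‖z i‖ ^ 2 ≤ 1 := by
    rw [← hz]
    exact Finset.single_le_sum (f := fun i => ‖z i‖ ^ 2)
      (fun i _ => sq_nonneg _) (Finset.mem_univ i)
  exact (pow_le_one_iff_of_nonneg (norm_nonneg _) two_ne_zero).mp h1

instance wpCompact (m : ℕ) (χ : Fin m → ℕ) : CompactSpace (WP m χ) := by
  constructor
  have : (Set.univ : Set (WP m χ)) = Set.range (Quot.mk (wRel m χ)) :=
    (Set.range_eq_univ.mpr Quot.mk_surjective).symm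
  rw [this]
  exact isCompact_range continuous_quot_mk

def circ : Type := {t : ℂ // ‖t‖ = 1}

instance : TopologicalSpace circ := by unfold circ; infer_instance

instance circCompact : CompactSpace circ := by
  suffices h : IsCompact {t : ℂ | ‖t‖ = 1} by
    exact isCompact_iff_compactSpace.mp h
  have : {t : ℂ | ‖t‖ = 1} = Metric.sphere (0:ℂ) 1 := by
    ext t; simp [Complex.dist_eq]
  rw [this]
  exact isCompact_sphere 0 1

def act (m : ℕ) (χ : Fin m → ℕ) (t : circ) (z : Sph m) : Sph m :=
  ⟨fun i => t.1 ^ χ i * (z : Fin m → ℂ) i, by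
    have : ∀ i, ‖t.1 ^ χ i * (z : Fin m → ℂ) i‖ ^ 2
        = ‖(z : Fin m → ℂ) i‖ ^ 2 := by
      intro i
      rw [norm_mul, norm_pow, t.2, one_pow, one_mul]
    simp only [this]
    exact z.2⟩

lemma act_continuous (m : ℕ) (χ : Fin m → ℕ) (t : circ) : Continuous (act m χ t) := by
  apply Continuous.subtype_mk
  apply continuous_pi
  intro i
  exact continuous_const.mul ((continuous_apply i).comp continuous_subtype_val)

lemma wRel_iff_act {m : ℕ} {χ : Fin m → ℕ} (z w : Sph m) :
    wRel m χ z w ↔ ∃ t : circ, act m χ t z = w := by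
  constructor
  · rintro ⟨t, ht, h⟩
    refine ⟨⟨t, ht⟩, ?_⟩
    apply Subtype.ext
    funext i
    exact (h i).symm
  · rintro ⟨t, rfl⟩
    exact ⟨t.1, t.2, fun i => rfl⟩

lemma isOpenMap_mk (m : ℕ) (χ : Fin m → ℕ) : IsOpenMap (Quot.mk (wRel m χ)) := by
  intro U hU
  rw [isOpen_coinduced]
  have hsat : Quot.mk (wRel m χ) ⁻¹' (Quot.mk (wRel m χ) '' U)
      = ⋃ t : circ, act m χ t ⁻¹' U := by
    ext z
    simp only [Set.mem_preimage, Set.mem_image, Set.mem_iUnion]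
    constructor
    · rintro ⟨u, hu, he⟩
      have hrel : wRel m χ u z := by
        have : wpMk m χ u = wpMk m χ z := he
        exact (wp_eq_iff u z).mp this
      obtain ⟨t, ht⟩ := (wRel_iff_act z u).mp ((wRel_equiv m χ).symm hrel)
      exact ⟨t, by rw [ht]; exact hu⟩
    · rintro ⟨t, ht⟩
      refine ⟨act m χ t z, ht, ?_⟩
      have : wRel m χ (act m χ t z) z := by
        apply (wRel_equiv m χ).symm
        exact (wRel_iff_act z (act m χ t z)).mpr ⟨t, rfl⟩
      exact Quot.sound this
  rw [hsat]
  exact isOpen_iUnion fun t => hU.preimage (act_continuous m χ t)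

lemma relSet_closed (m : ℕ) (χ : Fin m → ℕ) :
    IsClosed {q : Sph m × Sph m | wRel m χ q.1 q.2} := by
  have hg : Continuous (fun tz : circ × Sph m => (tz.2, act m χ tz.1 tz.2)) := by
    apply Continuous.prodMk continuous_snd
    apply Continuous.subtype_mk
    apply continuous_pi
    intro i
    apply Continuous.mul
    · exact (Continuous.comp continuous_subtype_val continuous_fst).pow (χ i)
    · exact (continuous_apply i).comp (continuous_subtype_val.comp continuous_snd)
  have : {q : Sph m × Sph m | wRel m χ q.1 q.2}
      = Set.range (fun tz : circ × Sph m => (tz.2, act m χ tz.1 tz.2)) := by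
    ext q
    simp only [Set.mem_setOf_eq, Set.mem_range, Prod.ext_iff]
    constructor
    · intro h
      obtain ⟨t, ht⟩ := (wRel_iff_act q.1 q.2).mp h
      exact ⟨(t, q.1), rfl, ht⟩
    · rintro ⟨⟨t, u⟩, h1, h2⟩
      simp only at h1 h2
      subst h1
      exact (wRel_iff_act q.1 q.2).mpr ⟨t, h2⟩
  rw [this]
  exact (isCompact_range hg).isClosed

instance wpT2 (m : ℕ) (χ : Fin m → ℕ) : T2Space (WP m χ) := by
  constructor
  intro x y hxy
  obtain ⟨z, rfl⟩ := Quot.exists_rep x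
  obtain ⟨w, rfl⟩ := Quot.exists_rep y
  have hzw : (z, w) ∈ {q : Sph m × Sph m | wRel m χ q.1 q.2}ᶜ := by
    intro h
    exact hxy (Quot.sound h)
  obtain ⟨U, V, hU, hV, hzU, hwV, hUV⟩ :=
    isOpen_prod_iff.mp (relSet_closed m χ).isOpen_compl z w hzw
  refine ⟨Quot.mk _ '' U, Quot.mk _ '' V, isOpenMap_mk m χ U hU, isOpenMap_mk m χ V hV,
    ⟨z, hzU, rfl⟩, ⟨w, hwV, rfl⟩, ?_⟩
  rw [Set.disjoint_left]
  rintro q ⟨a, ha, rfl⟩ ⟨b, hb, hab⟩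
  have hrel : wRel m χ b a := (wp_eq_iff b a).mp hab
  have : (a, b) ∈ U ×ˢ V := ⟨ha, hb⟩
  exact (hUV this) ((wRel_equiv m χ).symm hrel)

/-! ### Arithmetic of weights -/

lemma sVal_eq {m : ℕ} (A B : Fin m → ℕ) (s0 : ℕ) (h0 : 0 < s0)
    (hmem : ∀ i, B i ∣ s0 * A i)
    (hmin : ∀ s, 0 < s → (∀ i, B i ∣ s * A i) → s0 ∣ s) : sVal m A B = s0 := by
  have hne : {s : ℕ | 0 < s ∧ ∀ i, B i ∣ s * A i}.Nonempty := ⟨s0, h0, hmem⟩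
  have h1 := Nat.sInf_mem hne
  apply le_antisymm
  · exact Nat.sInf_le ⟨h0, hmem⟩
  · exact Nat.le_of_dvd h1.1 (hmin _ h1.1 h1.2)

section Arith

variable {m : ℕ} [Nonempty (Fin m)] (χ : Fin m → ℕ) (p : ℕ)

def alphaC (i : Fin m) : ℕ := χ i / p ^ (χ i).factorization p

def Lp : ℕ := Finset.univ.lcm (alphaC χ p)

def Ap : ℕ := Finset.univ.sup (fun i => (χ i).factorization p)

lemma Ap_def : Ap χ p = Finset.univ.sup (fun i => (χ i).factorization p) := rfl

lemma pCont_def (i : Fin m) : pCont m p χ i = p ^ (χ i).factorization p := rfl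

variable (hχ : ∀ i, 1 ≤ χ i) (hp : p.Prime)
include hχ hp

omit hp in
lemma chi_ne_zero (i : Fin m) : χ i ≠ 0 := by have := hχ i; omega

lemma alphaC_ne_zero (i : Fin m) : alphaC χ p i ≠ 0 :=
  (Nat.ordCompl_pos p (chi_ne_zero χ hχ i)).ne'

omit hχ hp in
lemma a_le_Ap' (i : Fin m) : (χ i).factorization p ≤ Ap χ p := by
  rw [Ap_def]
  exact Finset.le_sup (f := fun i => (χ i).factorization p) (Finset.mem_univ i)

omit hχ hp in
lemma ordProj_mul_alphaC (i : Fin m) : p ^ (χ i).factorization p * alphaC χ p i = χ i :=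
  Nat.ordProj_mul_ordCompl_eq_self (χ i) p

lemma Lp_pos : 0 < Lp χ p := by
  apply Nat.pos_of_ne_zero
  intro h
  rw [Lp, Finset.lcm_eq_zero_iff] at h
  obtain ⟨i, _, hi⟩ := h
  exact alphaC_ne_zero χ p hχ hp i hi

omit hχ hp in
lemma alphaC_dvd_Lp (i : Fin m) : alphaC χ p i ∣ Lp χ p :=
  Finset.dvd_lcm (Finset.mem_univ i)

lemma not_p_dvd_Lp : ¬ p ∣ Lp χ p := by
  intro h
  have h1 : Lp χ p ∣ ∏ i, alphaC χ p i :=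
    Finset.lcm_dvd fun i _ => Finset.dvd_prod_of_mem _ (Finset.mem_univ i)
  have h2 : p ∣ ∏ i, alphaC χ p i := h.trans h1
  obtain ⟨i, _, hi⟩ := (Prime.dvd_finset_prod_iff hp.prime _).mp h2
  exact Nat.not_dvd_ordCompl hp (chi_ne_zero χ hχ i) hi

lemma chi_dvd_Lp_mul (i : Fin m) : χ i ∣ Lp χ p * p ^ (χ i).factorization p := by
  conv_lhs => rw [← ordProj_mul_alphaC χ p i]
  rw [mul_comm (Lp χ p)]
  exact mul_dvd_mul_left _ (alphaC_dvd_Lp χ p i)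

lemma sval_E : sVal m (pCont m p χ) χ = Lp χ p := by
  apply sVal_eq
  · exact Lp_pos χ p hχ hp
  · intro i
    rw [pCont_def]
    exact chi_dvd_Lp_mul χ p hχ hp i
  · intro s hs hdvd
    apply Finset.lcm_dvd
    intro i _
    have h1 := hdvd i
    rw [pCont_def] at h1
    conv at h1 => lhs; rw [← ordProj_mul_alphaC χ p i]
    rw [mul_comm s] at h1
    exact (Nat.mul_dvd_mul_iff_left (pow_pos hp.pos _)).mp h1

lemma a_le_Ap (i : Fin m) : (χ i).factorization p ≤ Ap χ p := by
  rw [Ap_def]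
  exact Finset.le_sup (f := fun i => (χ i).factorization p) (Finset.mem_univ i)

lemma sval_P : sVal m (fun _ => 1) (pCont m p χ) = p ^ Ap χ p := by
  apply sVal_eq
  · exact pow_pos hp.pos _
  · intro i
    rw [mul_one, pCont_def]
    exact pow_dvd_pow p (a_le_Ap χ p hχ hp i)
  · intro s hs hdvd
    obtain ⟨i, _, hi⟩ := Finset.exists_mem_eq_sup (Finset.univ : Finset (Fin m))
      (Finset.univ_nonempty) (fun i => (χ i).factorization p)
    have h1 := hdvd i
    rw [mul_one, pCont_def] at h1
    rw [Ap_def, hi]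
    exact h1

lemma dE_mul_chi (i : Fin m) :
    dExp m (pCont m p χ) χ i * χ i = Lp χ p * p ^ (χ i).factorization p := by
  rw [dExp, sval_E χ p hχ hp, pCont_def]
  exact Nat.div_mul_cancel (chi_dvd_Lp_mul χ p hχ hp i)

lemma dP_mul_pow (i : Fin m) :
    dExp m (fun _ => 1) (pCont m p χ) i * p ^ (χ i).factorization p = p ^ Ap χ p := by
  have h0 : dExp m (fun _ => 1) (pCont m p χ) i
      = p ^ Ap χ p / p ^ (χ i).factorization p := by
    rw [dExp, sval_P χ p hχ hp, pCont_def, mul_one]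
  rw [h0]
  exact Nat.div_mul_cancel (pow_dvd_pow p (a_le_Ap χ p hχ hp i))

lemma dP_eq (i : Fin m) :
    dExp m (fun _ => 1) (pCont m p χ) i = p ^ (Ap χ p - (χ i).factorization p) := by
  have h1 := dP_mul_pow χ p hχ hp i
  have h2 : p ^ (Ap χ p - (χ i).factorization p) * p ^ (χ i).factorization p = p ^ Ap χ p := by
    rw [← pow_add]
    congr 1
    have := a_le_Ap χ p hχ hp i
    omega
  have h3 : 0 < p ^ (χ i).factorization p := pow_pos hp.pos _
  exact Nat.eq_of_mul_eq_mul_right h3 (h1.trans h2.symm)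

lemma dE_pos (i : Fin m) : 0 < dExp m (pCont m p χ) χ i := by
  rcases Nat.eq_zero_or_pos (dExp m (pCont m p χ) χ i) with h | h
  · exfalso
    have h1 := dE_mul_chi χ p hχ hp i
    rw [h, zero_mul] at h1
    have hL := Lp_pos χ p hχ hp
    have hP := pow_pos hp.pos ((χ i).factorization p)
    nlinarith
  · exact h

lemma dP_pos (i : Fin m) : 0 < dExp m (fun _ => 1) (pCont m p χ) i := by
  rw [dP_eq χ p hχ hp i]
  exact pow_pos hp.pos _

lemma lcm_eq : Finset.univ.lcm χ = Lp χ p * p ^ Ap χ p := by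
  have hco : Nat.Coprime (p ^ Ap χ p) (Lp χ p) :=
    Nat.Coprime.pow_left _ ((Nat.Prime.coprime_iff_not_dvd hp).mpr (not_p_dvd_Lp χ p hχ hp))
  apply Nat.dvd_antisymm
  · apply Finset.lcm_dvd
    intro i _
    conv_lhs => rw [← ordProj_mul_alphaC χ p i]
    rw [mul_comm (Lp χ p)]
    exact mul_dvd_mul (pow_dvd_pow p (a_le_Ap χ p hχ hp i)) (alphaC_dvd_Lp χ p i)
  · apply Nat.Coprime.mul_dvd_of_dvd_of_dvd hco.symm
    · apply Finset.lcm_dvd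
      intro i _
      refine dvd_trans ?_ (Finset.dvd_lcm (Finset.mem_univ i))
      conv_rhs => rw [← ordProj_mul_alphaC χ p i]
      exact dvd_mul_left _ _
    · obtain ⟨i, _, hi⟩ := Finset.exists_mem_eq_sup (Finset.univ : Finset (Fin m))
        (Finset.univ_nonempty) (fun i => (χ i).factorization p)
      rw [Ap_def, hi]
      exact dvd_trans (Nat.ordProj_dvd (χ i) p) (Finset.dvd_lcm (Finset.mem_univ i))

lemma chi_mul_dEdP (i : Fin m) :
    χ i * (dExp m (pCont m p χ) χ i * dExp m (fun _ => 1) (pCont m p χ) i)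
      = Finset.univ.lcm χ := by
  rw [lcm_eq χ p hχ hp]
  calc χ i * (dExp m (pCont m p χ) χ i * dExp m (fun _ => 1) (pCont m p χ) i)
      = (dExp m (pCont m p χ) χ i * χ i) * dExp m (fun _ => 1) (pCont m p χ) i := by ring
    _ = (Lp χ p * p ^ (χ i).factorization p) * dExp m (fun _ => 1) (pCont m p χ) i := by
        rw [dE_mul_chi χ p hχ hp i]
    _ = Lp χ p * (dExp m (fun _ => 1) (pCont m p χ) i * p ^ (χ i).factorization p) := by ring
    _ = Lp χ p * p ^ Ap χ p := by rw [dP_mul_pow χ p hχ hp i]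

end Arith

/-! ### The finite set of primes, CRT -/

section Qs

variable {m : ℕ} [Nonempty (Fin m)] (χ : Fin m → ℕ)

def Qs : Finset ℕ := Finset.univ.biUnion (fun i : Fin m => (χ i).primeFactors)

variable (hχ : ∀ i, 1 ≤ χ i)
include hχ

lemma mem_Qs {q : ℕ} : q ∈ Qs χ ↔ q.Prime ∧ ∃ i, q ∣ χ i := by
  rw [Qs, Finset.mem_biUnion]
  constructor
  · rintro ⟨i, _, hi⟩
    rw [Nat.mem_primeFactors] at hi
    exact ⟨hi.1, i, hi.2.1⟩
  · rintro ⟨hq, i, hi⟩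
    exact ⟨i, Finset.mem_univ i, Nat.mem_primeFactors.mpr ⟨hq, hi, chi_ne_zero χ hχ i⟩⟩

lemma lcm_dvd_prodA :
    Finset.univ.lcm χ ∣ ∏ q ∈ Qs χ, q ^ Ap χ q := by
  apply Finset.lcm_dvd
  intro j _
  have h1 : χ j = ∏ q ∈ (χ j).primeFactors, q ^ (χ j).factorization q := by
    conv_lhs => rw [← Nat.factorization_prod_pow_eq_self (chi_ne_zero χ hχ j)]
    rw [Finsupp.prod, Nat.support_factorization]
  have hsub : (χ j).primeFactors ⊆ Qs χ := by
    intro q hq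
    rw [Qs, Finset.mem_biUnion]
    exact ⟨j, Finset.mem_univ j, hq⟩
  have hext : ∀ x ∈ Qs χ, x ∉ (χ j).primeFactors → x ^ (χ j).factorization x = 1 := by
    intro x _ hx
    have h0 : (χ j).factorization x = 0 := by
      apply Finsupp.notMem_support_iff.mp
      rw [Nat.support_factorization]
      exact hx
    rw [h0, pow_zero]
  have h2 : χ j = ∏ q ∈ Qs χ, q ^ (χ j).factorization q :=
    h1.trans (Finset.prod_subset hsub hext)
  rw [h2]
  apply Finset.prod_dvd_prod_of_dvd
  intro q _
  exact pow_dvd_pow q (a_le_Ap' χ q j)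

lemma pairwise_coprime_Qs (f : ℕ → ℕ) :
    (↑(Qs χ) : Set ℕ).Pairwise (Function.onFun IsCoprime fun q => (q : ℤ) ^ f q) := by
  intro a ha b hb hab
  have hpa := ((mem_Qs χ hχ).mp (Finset.mem_coe.mp ha)).1
  have hpb := ((mem_Qs χ hχ).mp (Finset.mem_coe.mp hb)).1
  have h : IsCoprime ((a ^ f a : ℕ) : ℤ) ((b ^ f b : ℕ) : ℤ) :=
    Nat.isCoprime_iff_coprime.mpr
      (Nat.Coprime.pow (f a) (f b) (((Nat.coprime_primes hpa hpb).mpr hab)))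
  push_cast at h
  exact h

end Qs

lemma crt (s : Finset ℕ) (M r : ℕ → ℤ)
    (hco : (↑s : Set ℕ).Pairwise (Function.onFun IsCoprime M)) :
    ∃ c : ℤ, ∀ q ∈ s, M q ∣ c - r q := by
  classical
  induction s using Finset.induction_on with
  | empty => exact ⟨0, by simp⟩
  | @insert q s hq ih =>
    obtain ⟨c', hc'⟩ := ih (hco.mono (Finset.coe_subset.mpr (Finset.subset_insert q s)))
    have hcop : IsCoprime (M q) (∏ x ∈ s, M x) := by
      apply IsCoprime.prod_right
      intro q' hq'
      exact hco (Finset.mem_coe.mpr (Finset.mem_insert_self q s))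
        (Finset.mem_coe.mpr (Finset.mem_insert_of_mem hq'))
        (by rintro rfl; exact hq hq')
    obtain ⟨u, v, huv⟩ := hcop
    refine ⟨r q * (v * ∏ x ∈ s, M x) + c' * (u * M q), ?_⟩
    intro q' hq'
    rcases Finset.mem_insert.mp hq' with rfl | hmem
    · refine ⟨u * (c' - r q'), ?_⟩
      linear_combination (r q') * huv
    · have h1 : M q' ∣ (r q * (v * ∏ x ∈ s, M x) + c' * (u * M q)) - c' := by
        refine dvd_trans (Finset.dvd_prod_of_mem M hmem) ⟨v * (r q - c'), ?_⟩
        linear_combination c' * huv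
      have h2 := hc' q' hmem
      have := dvd_add h1 h2
      simpa using this

lemma lcm_dvd_mul {m : ℕ} [Nonempty (Fin m)] (χ : Fin m → ℕ) (hχ : ∀ i, 1 ≤ χ i)
    (i : Fin m) (D : ℤ)
    (h : ∀ q ∈ Qs χ, (q : ℤ) ^ (Ap χ q - (χ i).factorization q) ∣ D) :
    ((Finset.univ.lcm χ : ℕ) : ℤ) ∣ (χ i : ℤ) * D := by
  have h1 : ((Finset.univ.lcm χ : ℕ) : ℤ) ∣ ((∏ q ∈ Qs χ, q ^ Ap χ q : ℕ) : ℤ) :=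
    Int.natCast_dvd_natCast.mpr (lcm_dvd_prodA χ hχ)
  refine dvd_trans h1 ?_
  push_cast
  apply Finset.prod_dvd_of_coprime (pairwise_coprime_Qs χ hχ (fun q => Ap χ q))
  intro q hq
  have haA : (χ i).factorization q ≤ Ap χ q := a_le_Ap' χ q i
  have h2 : (q : ℤ) ^ Ap χ q
      = (q : ℤ) ^ (χ i).factorization q * (q : ℤ) ^ (Ap χ q - (χ i).factorization q) := by
    rw [← pow_add]
    congr 1
    omega
  rw [h2]
  have h3 : ((q : ℤ)) ^ (χ i).factorization q ∣ (χ i : ℤ) := by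
    have := Nat.ordProj_dvd (χ i) q
    exact_mod_cast Int.natCast_dvd_natCast.mpr this
  exact mul_dvd_mul h3 (h q hq)

/-! ### More ee lemmas -/

lemma ee_ne_zero (x : ℝ) : ee x ≠ 0 := Complex.exp_ne_zero _

lemma ee_eq_ee_iff (a b : ℝ) : ee a = ee b ↔ ∃ k : ℤ, a - b = k := by
  rw [← ee_eq_one_iff (a - b)]
  constructor
  · intro h
    have : ee (a - b) * ee b = ee b := by rw [← ee_add]; rw [sub_add_cancel, h]
    exact mul_right_cancel₀ (ee_ne_zero b) (by rw [this, one_mul])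
  · intro h
    have : ee a = ee (a - b) * ee b := by rw [← ee_add, sub_add_cancel]
    rw [this, h, one_mul]

lemma abs_unit_decomp {y : ℂ} : ∃ x : ℝ, y = (‖y‖ : ℂ) * ee x := by
  rcases eq_or_ne y 0 with rfl | hy
  · exact ⟨0, by simp⟩
  · have h1 : ‖y / (‖y‖ : ℂ)‖ = 1 := by
      rw [norm_div, Complex.norm_real, Real.norm_eq_abs, abs_of_pos (norm_pos_iff.mpr hy), div_self
        (norm_ne_zero_iff.mpr hy)]
    obtain ⟨x, hx⟩ := exists_ee h1
    refine ⟨x, ?_⟩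
    rw [← hx, mul_div_assoc', mul_comm, mul_div_assoc,
      div_self (Complex.ofReal_ne_zero.mpr (norm_ne_zero_iff.mpr hy)), mul_one]

lemma real_pow_inj {a b : ℝ} (ha : 0 ≤ a) (hb : 0 ≤ b) {k : ℕ} (hk : k ≠ 0)
    (h : a ^ k = b ^ k) : a = b := by
  rcases lt_trichotomy a b with hlt | he | hlt
  · exact absurd h (pow_lt_pow_left₀ hlt ha hk).ne
  · exact he
  · exact absurd h.symm (pow_lt_pow_left₀ hlt hb hk).ne

/-! ### Evaluating an e-map -/

lemma emap_spec {m : ℕ} {A B : Fin m → ℕ} {e : WP m B → WP m A} (hA : ∀ i, 1 ≤ A i)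
    (he : IsEMap m A B e) (z : Sph m) :
    ∃ (w : Sph m) (l : ℝ), 0 < l ∧ (∀ i, (w : Fin m → ℂ) i
      = (l : ℂ) ^ A i * (z : Fin m → ℂ) i ^ dExp m A B i) ∧ e (wpMk m B z) = wpMk m A w := by
  obtain ⟨j, hj⟩ := sph_exists_ne z
  obtain ⟨w, hw⟩ := exists_isNorm A hA (powVec m (dExp m A B) z) j (pow_ne_zero _ hj)
  obtain ⟨l, hl, hco⟩ := hw
  exact ⟨w, l, hl, hco, he.2 z w ⟨l, hl, hco⟩⟩

lemma key_extract {m : ℕ} [Nonempty (Fin m)] {χ : Fin m → ℕ} (hχ : ∀ i, 1 ≤ χ i)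
    {p : ℕ} (hp : p.Prime)
    {e : WP m χ → WP m (pCont m p χ)} (he : IsEMap m (pCont m p χ) χ e)
    (z z' : Sph m) (h : e (wpMk m χ z) = e (wpMk m χ z')) :
    ∃ (t : ℂ) (l l' : ℝ), ‖t‖ = 1 ∧ 0 < l ∧ 0 < l' ∧ ∀ i,
      (l' : ℂ) ^ pCont m p χ i * (z' : Fin m → ℂ) i ^ dExp m (pCont m p χ) χ i
        = t ^ pCont m p χ i * ((l : ℂ) ^ pCont m p χ i
            * (z : Fin m → ℂ) i ^ dExp m (pCont m p χ) χ i) := by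
  have hωpos : ∀ i, 1 ≤ pCont m p χ i := fun i => (pow_pos hp.pos _)
  obtain ⟨w, l, hl, hw, heq⟩ := emap_spec hωpos he z
  obtain ⟨w', l', hl', hw', heq'⟩ := emap_spec hωpos he z'
  rw [heq, heq'] at h
  obtain ⟨t, ht, hrel⟩ := (wp_eq_iff w w').mp h
  refine ⟨t, l, l', ht, hl, hl', fun i => ?_⟩
  rw [← hw i, ← hw' i]
  exact hrel i

/-! ### Injectivity -/

lemma inj_lemma {m : ℕ} [Nonempty (Fin m)] {χ : Fin m → ℕ} (hχ : ∀ i, 1 ≤ χ i)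
    (hQ : Nonempty (PrimesOf m χ))
    (E : ∀ p : PrimesOf m χ, WP m χ → WP m (pCont m p.1 χ))
    (hE : ∀ p, IsEMap m (pCont m p.1 χ) χ (E p))
    (z z' : Sph m) (h : ∀ p, E p (wpMk m χ z) = E p (wpMk m χ z')) :
    wpMk m χ z = wpMk m χ z' := by
  classical
  obtain ⟨p₀⟩ := hQ
  have key := fun p : PrimesOf m χ => key_extract hχ p.2.1 (hE p) z z' (h p)
  choose t l l' habs hl hl' hrel using key
  set dE : ∀ _ : PrimesOf m χ, Fin m → ℕ := fun p => dExp m (pCont m p.1 χ) χ with hdE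
  set dP : ∀ _ : PrimesOf m χ, Fin m → ℕ :=
    fun p => dExp m (fun _ => 1) (pCont m p.1 χ) with hdP
  have habs_rel : ∀ p i, (l' p) ^ pCont m p.1 χ i * ‖(z' : Fin m → ℂ) i‖ ^ dE p i
      = (l p) ^ pCont m p.1 χ i * ‖(z : Fin m → ℂ) i‖ ^ dE p i := by
    intro p i
    have h1 := congrArg (‖·‖) (hrel p i)
    simpa [norm_mul, norm_pow, Complex.norm_real, Real.norm_eq_abs, abs_of_pos (hl p), abs_of_pos (hl' p),
      habs p] using h1
  -- Step A : moduli agree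
  have hdiv0 : 0 < l p₀ / l' p₀ := div_pos (hl p₀) (hl' p₀)
  set ρ : ℝ := (l p₀ / l' p₀) ^ ((1 : ℝ) / (Lp χ p₀.1 : ℝ)) with hρdef
  have hLpos : 0 < (Lp χ p₀.1 : ℝ) := by exact_mod_cast Lp_pos χ p₀.1 hχ p₀.2.1
  have hρpos : 0 < ρ := Real.rpow_pos_of_pos hdiv0 _
  have hρL : ρ ^ (Lp χ p₀.1) = l p₀ / l' p₀ := by
    rw [hρdef, ← Real.rpow_natCast ((l p₀ / l' p₀) ^ ((1 : ℝ) / (Lp χ p₀.1 : ℝ))) (Lp χ p₀.1),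
      ← Real.rpow_mul hdiv0.le, one_div, inv_mul_cancel₀ hLpos.ne', Real.rpow_one]
  have hmag : ∀ i, ‖(z' : Fin m → ℂ) i‖ = ρ ^ χ i * ‖(z : Fin m → ℂ) i‖ := by
    intro i
    apply real_pow_inj (norm_nonneg _)
      (mul_nonneg (pow_nonneg hρpos.le _) (norm_nonneg _))
      (dE_pos χ p₀.1 hχ p₀.2.1 i).ne'
    have h2 : (ρ ^ χ i) ^ dE p₀ i = (l p₀ / l' p₀) ^ pCont m p₀.1 χ i := by
      calc (ρ ^ χ i) ^ dE p₀ i = ρ ^ (dE p₀ i * χ i) := by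
            rw [← pow_mul, mul_comm (χ i)]
        _ = ρ ^ (Lp χ p₀.1 * pCont m p₀.1 χ i) := by
            rw [hdE, dE_mul_chi χ p₀.1 hχ p₀.2.1 i, pCont_def]
        _ = (ρ ^ Lp χ p₀.1) ^ pCont m p₀.1 χ i := pow_mul ρ _ _
        _ = (l p₀ / l' p₀) ^ pCont m p₀.1 χ i := by rw [hρL]
    have h3 : ‖(z' : Fin m → ℂ) i‖ ^ dE p₀ i
        = (l p₀ / l' p₀) ^ pCont m p₀.1 χ i * ‖(z : Fin m → ℂ) i‖ ^ dE p₀ i := by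
      rw [div_pow, div_mul_eq_mul_div, eq_div_iff (pow_ne_zero _ (hl' p₀).ne')]
      linear_combination habs_rel p₀ i
    rw [h3, mul_pow, h2]
  have hρ1 : ρ = 1 := by
    obtain ⟨j, hj⟩ := sph_exists_ne z
    apply sumpow_rigid (e := fun i => 2 * χ i)
      (fun i => le_trans (hχ i) (Nat.le_mul_of_pos_left _ (by norm_num)))
      (b := fun i => ‖(z : Fin m → ℂ) i‖ ^ 2) (fun i => sq_nonneg _)
      (j := j) (by have := norm_pos_iff.mpr hj; positivity) hρpos.le
    have hsq : ∀ i, ρ ^ (2 * χ i) * ‖(z : Fin m → ℂ) i‖ ^ 2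
        = ‖(z' : Fin m → ℂ) i‖ ^ 2 := by
      intro i
      rw [hmag i, mul_pow, ← pow_mul, mul_comm (χ i) 2]
    simp only [hsq]
    rw [z.2, z'.2]
  have hmageq : ∀ i, ‖(z' : Fin m → ℂ) i‖ = ‖(z : Fin m → ℂ) i‖ := by
    intro i
    rw [hmag i, hρ1, one_pow, one_mul]
  -- Step B : the scalars agree
  obtain ⟨j0, hj0⟩ := sph_exists_ne z
  have hll : ∀ p, l' p = l p := by
    intro p
    have h1 := habs_rel p j0
    rw [hmageq j0] at h1
    have hz0 : ‖(z : Fin m → ℂ) j0‖ ^ dE p j0 ≠ 0 :=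
      pow_ne_zero _ (norm_ne_zero_iff.mpr hj0)
    exact real_pow_inj (hl' p).le (hl p).le (pow_pos p.2.1.pos _).ne'
      (mul_right_cancel₀ hz0 h1)
  -- Step C : phases
  have hxex : ∀ i, ∃ xv : ℝ, (z : Fin m → ℂ) i ≠ 0 →
      (z' : Fin m → ℂ) i = ee xv * (z : Fin m → ℂ) i := by
    intro i
    rcases eq_or_ne ((z : Fin m → ℂ) i) 0 with h0 | h0
    · exact ⟨0, fun hc => absurd h0 hc⟩
    · have hu : ‖(z' : Fin m → ℂ) i / (z : Fin m → ℂ) i‖ = 1 := by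
        rw [norm_div, hmageq i, div_self (norm_ne_zero_iff.mpr h0)]
      obtain ⟨xv, hxv⟩ := exists_ee hu
      refine ⟨xv, fun _ => ?_⟩
      rw [← hxv]
      field_simp
  choose x hx using hxex
  choose s hs using fun p : PrimesOf m χ => exists_ee (habs p)
  have hMex : ∀ (p : PrimesOf m χ) (i : Fin m), ∃ Mk : ℤ, (z : Fin m → ℂ) i ≠ 0 →
      (dE p i : ℝ) * x i - (pCont m p.1 χ i : ℝ) * s p = Mk := by
    intro p i
    rcases eq_or_ne ((z : Fin m → ℂ) i) 0 with h0 | h0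
    · exact ⟨0, fun hc => absurd h0 hc⟩
    · have h1 := hrel p i
      rw [hll p, hx i h0, hs p, mul_pow] at h1
      have hlc : ((l p : ℝ) : ℂ) ^ pCont m p.1 χ i ≠ 0 :=
        pow_ne_zero _ (by exact_mod_cast (hl p).ne')
      have hzc : ((z : Fin m → ℂ) i) ^ dE p i ≠ 0 := pow_ne_zero _ h0
      have h2 : ((l p : ℝ) : ℂ) ^ pCont m p.1 χ i * (ee (x i) ^ dE p i * ((z : Fin m → ℂ) i) ^ dE p i)
          = ((l p : ℝ) : ℂ) ^ pCont m p.1 χ i * (ee (s p) ^ pCont m p.1 χ i * ((z : Fin m → ℂ) i) ^ dE p i) := by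
        linear_combination h1
      have h3 := mul_left_cancel₀ hlc h2
      have h4 := mul_right_cancel₀ hzc h3
      rw [ee_pow, ee_pow, ee_eq_ee_iff] at h4
      obtain ⟨k, hk⟩ := h4
      exact ⟨k, fun _ => hk⟩
  choose M hM using hMex
  -- Step D : CRT
  set K : Finset (Fin m) := Finset.univ.filter (fun i => (z : Fin m → ℂ) i ≠ 0) with hKdef
  have hKmem : ∀ i, i ∈ K ↔ (z : Fin m → ℂ) i ≠ 0 := by
    intro i; simp [hKdef]
  have hKne : K.Nonempty := ⟨j0, (hKmem j0).mpr hj0⟩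
  set D0 : Fin m → ℕ := fun i => dE p₀ i * dP p₀ i with hD0
  have hD0eq : ∀ (p : PrimesOf m χ) (i : Fin m), dE p i * dP p i = D0 i := by
    intro p i
    apply Nat.eq_of_mul_eq_mul_left (hχ i)
    exact (chi_mul_dEdP χ p.1 hχ p.2.1 i).trans (chi_mul_dEdP χ p₀.1 hχ p₀.2.1 i).symm
  set Y : Fin m → ℝ := fun i => (D0 i : ℝ) * x i with hY
  have hYs : ∀ (p : PrimesOf m χ), ∀ i ∈ K,
      Y i = ((p.1 ^ Ap χ p.1 : ℕ) : ℝ) * s p + (dP p i : ℝ) * (M p i : ℝ) := by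
    intro p i hiK
    have hM' := hM p i ((hKmem i).mp hiK)
    have hA2 : ((dP p i * pCont m p.1 χ i : ℕ) : ℝ) = ((p.1 ^ Ap χ p.1 : ℕ) : ℝ) := by
      rw [hdP, pCont_def, dP_mul_pow χ p.1 hχ p.2.1 i]
    have hA3 : Y i = ((dE p i * dP p i : ℕ) : ℝ) * x i := by
      rw [hY, hD0eq p i]
    push_cast at hA2 hA3 ⊢
    linear_combination hA3 + (dP p i : ℝ) * hM' + (s p) * hA2
  obtain ⟨i₀, hi₀K⟩ := hKne
  set ZI : Fin m → ℤ := fun i => (dP p₀ i : ℤ) * M p₀ i - (dP p₀ i₀ : ℤ) * M p₀ i₀ with hZI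
  have hZIr : ∀ i ∈ K, Y i - Y i₀ = (ZI i : ℝ) := by
    intro i hiK
    rw [hYs p₀ i hiK, hYs p₀ i₀ hi₀K, hZI]
    push_cast
    ring
  have hZIpz : ∀ (p : PrimesOf m χ), ∀ i ∈ K,
      ZI i = (dP p i : ℤ) * M p i - (dP p i₀ : ℤ) * M p i₀ := by
    intro p i hiK
    have hr : (ZI i : ℝ) = ((dP p i : ℤ) * M p i - (dP p i₀ : ℤ) * M p i₀ : ℤ) := by
      rw [← hZIr i hiK, hYs p i hiK, hYs p i₀ hi₀K]
      push_cast
      ring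
    exact_mod_cast hr
  have histar : ∀ q : ℕ, ∃ i, i ∈ K ∧ ∀ i' ∈ K,
      (χ i).factorization q ≤ (χ i').factorization q := by
    intro q
    obtain ⟨i, hi, hmin⟩ := Finset.exists_min_image K (fun i => (χ i).factorization q) ⟨i₀, hi₀K⟩
    exact ⟨i, hi, hmin⟩
  choose istar histarK histarMin using histar
  obtain ⟨c, hc⟩ := crt (Qs χ) (fun q => (q : ℤ) ^ (Ap χ q - (χ (istar q)).factorization q))
      (fun q => ZI (istar q)) (pairwise_coprime_Qs χ hχ _)
  have hdvd : ∀ q ∈ Qs χ, ∀ i ∈ K, (q : ℤ) ^ (Ap χ q - (χ i).factorization q) ∣ c - ZI i := by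
    intro q hq i hiK
    set pp : PrimesOf m χ := ⟨q, (mem_Qs χ hχ).mp hq⟩ with hpp
    have hqp : q.Prime := ((mem_Qs χ hχ).mp hq).1
    have hle : Ap χ q - (χ i).factorization q ≤ Ap χ q - (χ (istar q)).factorization q := by
      have h5 := histarMin q i hiK
      omega
    have h1 : (q : ℤ) ^ (Ap χ q - (χ i).factorization q) ∣ c - ZI (istar q) :=
      dvd_trans (pow_dvd_pow _ hle) (hc q hq)
    have e1n : dP pp i = q ^ (Ap χ q - (χ i).factorization q) := dP_eq χ q hχ hqp i
    have e1n' : dP pp (istar q) = q ^ (Ap χ q - (χ (istar q)).factorization q) :=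
      dP_eq χ q hχ hqp (istar q)
    have e1 : ((dP pp i : ℕ) : ℤ) = (q : ℤ) ^ (Ap χ q - (χ i).factorization q) := by
      rw [e1n]
      push_cast
      ring
    have e2 : (q : ℤ) ^ (Ap χ q - (χ i).factorization q) ∣ ((dP pp (istar q) : ℕ) : ℤ) := by
      rw [e1n']
      have h7 : ((q ^ (Ap χ q - (χ (istar q)).factorization q) : ℕ) : ℤ)
          = (q : ℤ) ^ (Ap χ q - (χ (istar q)).factorization q) := by push_cast; ring
      rw [h7]
      exact pow_dvd_pow _ hle
    have h2 : (q : ℤ) ^ (Ap χ q - (χ i).factorization q) ∣ ZI i - ZI (istar q) := by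
      rw [hZIpz pp i hiK, hZIpz pp (istar q) (histarK q)]
      have hx1 : (ZI i : ℤ) = ZI i := rfl
      have : (dP pp i : ℤ) * M pp i - (dP pp i₀ : ℤ) * M pp i₀
          - ((dP pp (istar q) : ℤ) * M pp (istar q) - (dP pp i₀ : ℤ) * M pp i₀)
          = (dP pp i : ℤ) * M pp i - (dP pp (istar q) : ℤ) * M pp (istar q) := by ring
      rw [this]
      apply dvd_sub
      · rw [← e1]; exact Dvd.intro _ rfl
      · exact Dvd.dvd.mul_right e2 _
    have h3 : c - ZI i = (c - ZI (istar q)) - (ZI i - ZI (istar q)) := by ring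
    rw [h3]
    exact dvd_sub h1 h2
  have hlcmne : Finset.univ.lcm χ ≠ 0 := by
    rw [lcm_eq χ p₀.1 hχ p₀.2.1]
    have := Lp_pos χ p₀.1 hχ p₀.2.1
    have := pow_pos p₀.2.1.pos (Ap χ p₀.1)
    positivity
  have hlcm0 : ((Finset.univ.lcm χ : ℕ) : ℝ) ≠ 0 := by exact_mod_cast hlcmne
  set tt : ℝ := (Y i₀ + c) / ((Finset.univ.lcm χ : ℕ) : ℝ) with htt
  apply Quot.sound
  refine ⟨ee tt, abs_ee tt, fun i => ?_⟩
  rcases eq_or_ne ((z : Fin m → ℂ) i) 0 with h0 | h0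
  · rw [h0, mul_zero]
    have : ‖(z' : Fin m → ℂ) i‖ = 0 := by rw [hmageq i, h0, norm_zero]
    exact norm_eq_zero.mp this
  · have hiK : i ∈ K := (hKmem i).mpr h0
    rw [hx i h0, ee_pow]
    obtain ⟨k, hk⟩ := lcm_dvd_mul χ hχ i (c - ZI i) (fun q hq => hdvd q hq i hiK)
    have hxY : ((χ i : ℕ) : ℝ) * Y i = ((Finset.univ.lcm χ : ℕ) : ℝ) * x i := by
      rw [hY]
      have h6 : ((χ i * D0 i : ℕ) : ℝ) = ((Finset.univ.lcm χ : ℕ) : ℝ) := by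
        rw [hD0, chi_mul_dEdP χ p₀.1 hχ p₀.2.1 i]
      push_cast at h6 ⊢
      linear_combination (x i) * h6
    have hee : (χ i : ℝ) * tt - x i = (k : ℝ) := by
      rw [htt]
      have hZr := hZIr i hiK
      have hkr : ((χ i : ℕ) : ℝ) * ((c : ℝ) - (ZI i : ℝ))
          = ((Finset.univ.lcm χ : ℕ) : ℝ) * (k : ℝ) := by exact_mod_cast congrArg Int.cast hk
      field_simp
      linear_combination hkr + hxY - ((χ i : ℝ)) * hZr
    have := (ee_eq_ee_iff ((χ i : ℝ) * tt) (x i)).mpr ⟨k, hee⟩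
    rw [this]

/-! ### Compatibility of the composites -/

lemma composite_rep {m : ℕ} [Nonempty (Fin m)] {χ : Fin m → ℕ} (hχ : ∀ i, 1 ≤ χ i)
    {p : ℕ} (hp : p.Prime)
    {Ep : WP m χ → WP m (pCont m p χ)}
    {Pjp : WP m (pCont m p χ) → WP m (fun _ => 1)}
    (hEp : IsEMap m (pCont m p χ) χ Ep)
    (hPjp : IsEMap m (fun _ => 1) (pCont m p χ) Pjp)
    (z : Sph m) :
    ∃ (W : Sph m) (c : ℝ) (D : Fin m → ℕ), 0 < c ∧ (∀ i, χ i * D i = Finset.univ.lcm χ) ∧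
      (∀ i, (W : Fin m → ℂ) i = (c : ℂ) * (z : Fin m → ℂ) i ^ D i) ∧
      Pjp (Ep (wpMk m χ z)) = wpMk m (fun _ => 1) W := by
  have hωpos : ∀ i, 1 ≤ pCont m p χ i := fun i => pow_pos hp.pos _
  obtain ⟨w, l, hl, hw, he1⟩ := emap_spec hωpos hEp z
  obtain ⟨W, l2, hl2, hW, he2⟩ := emap_spec (fun _ => le_refl 1) hPjp w
  refine ⟨W, l2 * l ^ (p ^ Ap χ p),
    fun i => dExp m (pCont m p χ) χ i * dExp m (fun _ => 1) (pCont m p χ) i,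
    by positivity, fun i => chi_mul_dEdP χ p hχ hp i, fun i => ?_, by rw [he1, he2]⟩
  rw [hW i, hw i, mul_pow, ← pow_mul, ← pow_mul]
  have hexp : pCont m p χ i * dExp m (fun _ => 1) (pCont m p χ) i = p ^ Ap χ p := by
    rw [mul_comm, pCont_def]
    exact dP_mul_pow χ p hχ hp i
  rw [hexp]
  push_cast
  ring

lemma compat_lemma {m : ℕ} [Nonempty (Fin m)] {χ : Fin m → ℕ} (hχ : ∀ i, 1 ≤ χ i)
    {p q : ℕ} (hp : p.Prime) (hq : q.Prime)
    {Ep : WP m χ → WP m (pCont m p χ)} {Pjp : WP m (pCont m p χ) → WP m (fun _ => 1)}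
    {Eq' : WP m χ → WP m (pCont m q χ)} {Pjq : WP m (pCont m q χ) → WP m (fun _ => 1)}
    (hEp : IsEMap m (pCont m p χ) χ Ep) (hPjp : IsEMap m (fun _ => 1) (pCont m p χ) Pjp)
    (hEq : IsEMap m (pCont m q χ) χ Eq') (hPjq : IsEMap m (fun _ => 1) (pCont m q χ) Pjq)
    (x : WP m χ) : Pjp (Ep x) = Pjq (Eq' x) := by
  obtain ⟨z, rfl⟩ := Quot.exists_rep x
  have hz : Quot.mk (wRel m χ) z = wpMk m χ z := rfl
  rw [hz]
  obtain ⟨W1, c1, D1, hc1, hD1, hW1, he1⟩ := composite_rep hχ hp hEp hPjp z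
  obtain ⟨W2, c2, D2, hc2, hD2, hW2, he2⟩ := composite_rep hχ hq hEq hPjq z
  rw [he1, he2]
  have hDeq : ∀ i, D1 i = D2 i := fun i =>
    Nat.eq_of_mul_eq_mul_left (hχ i) ((hD1 i).trans (hD2 i).symm)
  -- the scalars agree
  obtain ⟨j, hj⟩ := sph_exists_ne z
  have hS : ∀ (c : ℝ) (W : Sph m), 0 < c → (∀ i, (W : Fin m → ℂ) i
      = (c : ℂ) * (z : Fin m → ℂ) i ^ D1 i) →
      c ^ 2 * ∑ i, ‖(z : Fin m → ℂ) i ^ D1 i‖ ^ 2 = 1 := by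
    intro c W hc hW
    have h1 : ∀ i, ‖(W : Fin m → ℂ) i‖ ^ 2
        = c ^ 2 * ‖(z : Fin m → ℂ) i ^ D1 i‖ ^ 2 := by
      intro i
      rw [hW i, norm_mul, Complex.norm_real, Real.norm_eq_abs, abs_of_pos hc, mul_pow]
    have h2 := W.2
    simp only [h1] at h2
    rw [← Finset.mul_sum] at h2
    exact h2
  have hSpos : 0 < ∑ i, ‖(z : Fin m → ℂ) i ^ D1 i‖ ^ 2 := by
    have hterm : 0 < ‖(z : Fin m → ℂ) j ^ D1 j‖ ^ 2 := by
      have : (z : Fin m → ℂ) j ^ D1 j ≠ 0 := pow_ne_zero _ hj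
      have := norm_pos_iff.mpr this
      positivity
    exact Finset.sum_pos' (fun i _ => sq_nonneg _) ⟨j, Finset.mem_univ j, hterm⟩
  have hW2' : ∀ i, (W2 : Fin m → ℂ) i = (c2 : ℂ) * (z : Fin m → ℂ) i ^ D1 i := by
    intro i
    rw [hW2 i, hDeq i]
  have hceq : c1 = c2 := by
    have e1 := hS c1 W1 hc1 hW1
    have e2 := hS c2 W2 hc2 hW2'
    have : c1 ^ 2 = c2 ^ 2 := by
      have hne := hSpos.ne'
      field_simp at e1 e2
      nlinarith [e1, e2]
    exact real_pow_inj hc1.le hc2.le (two_ne_zero) this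
  have : W1 = W2 := by
    apply Subtype.ext
    funext i
    rw [hW1 i, hW2' i, hceq]
  rw [this]

/-! ### Surjectivity -/

lemma surj_lemma {m : ℕ} [Nonempty (Fin m)] {χ : Fin m → ℕ} (hχ : ∀ i, 1 ≤ χ i)
    (hQ : Nonempty (PrimesOf m χ))
    (E : ∀ p : PrimesOf m χ, WP m χ → WP m (pCont m p.1 χ))
    (hE : ∀ p, IsEMap m (pCont m p.1 χ) χ (E p))
    (Pj : ∀ p : PrimesOf m χ, WP m (pCont m p.1 χ) → WP m (fun _ => 1))
    (hPj : ∀ p, IsEMap m (fun _ => 1) (pCont m p.1 χ) (Pj p))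
    (u : ∀ p : PrimesOf m χ, WP m (pCont m p.1 χ))
    (hu : ∀ p q, Pj p (u p) = Pj q (u q)) :
    ∃ z : Sph m, ∀ p, E p (wpMk m χ z) = u p := by
  classical
  obtain ⟨p₀⟩ := hQ
  choose y hy using fun p => Quot.exists_rep (u p)
  set dE : ∀ _ : PrimesOf m χ, Fin m → ℕ := fun p => dExp m (pCont m p.1 χ) χ with hdE
  set dP : ∀ _ : PrimesOf m χ, Fin m → ℕ :=
    fun p => dExp m (fun _ => 1) (pCont m p.1 χ) with hdP
  have hVs := fun p : PrimesOf m χ =>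
    emap_spec (A := fun _ => (1:ℕ)) (fun _ => le_refl 1) (hPj p) (y p)
  choose V l2 hl2 hVco hVeq using hVs
  -- compatibility
  have hVrel : ∀ p : PrimesOf m χ, wRel m (fun _ => 1) (V p) (V p₀) := by
    intro p
    apply (wp_eq_iff (V p) (V p₀)).mp
    rw [← hVeq p, ← hVeq p₀]
    have h1 : wpMk m (pCont m p.1 χ) (y p) = u p := hy p
    have h2 : wpMk m (pCont m p₀.1 χ) (y p₀) = u p₀ := hy p₀
    rw [h1, h2]
    exact hu p p₀
  choose τ habsτ hτ using hVrel
  -- magnitudes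
  set R : Fin m → ℝ := fun i => ‖(V p₀ : Fin m → ℂ) i‖ with hR
  have hRV : ∀ p i, ‖(V p : Fin m → ℂ) i‖ = R i := by
    intro p i
    rw [hR]
    have := congrArg (‖·‖) (hτ p i)
    rw [norm_mul, norm_pow, habsτ p, one_pow, one_mul] at this
    exact this.symm
  have hRy : ∀ p i, R i = l2 p * ‖(y p : Fin m → ℂ) i‖ ^ dP p i := by
    intro p i
    rw [← hRV p i, hVco p i, norm_mul, norm_pow, norm_pow, Complex.norm_real, Real.norm_eq_abs,
      abs_of_pos (hl2 p), pow_one]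
  have hRnn : ∀ i, 0 ≤ R i := fun i => norm_nonneg _
  set K : Finset (Fin m) := Finset.univ.filter (fun i => R i ≠ 0) with hKdef
  have hKmem : ∀ i, i ∈ K ↔ R i ≠ 0 := by intro i; simp [hKdef]
  have hKy : ∀ (p : PrimesOf m χ) i, i ∈ K ↔ (y p : Fin m → ℂ) i ≠ 0 := by
    intro p i
    rw [hKmem i, hRy p i]
    constructor
    · intro hne h0
      rw [h0] at hne
      simp only [norm_zero] at hne
      rw [zero_pow (dP_pos χ p.1 hχ p.2.1 i).ne', mul_zero] at hne
      exact hne rfl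
    · intro hne h0
      apply hne
      have h1 : ‖(y p : Fin m → ℂ) i‖ ^ dP p i = 0 := by
        rcases mul_eq_zero.mp h0 with h | h
        · exact absurd h (hl2 p).ne'
        · exact h
      have h2 := pow_eq_zero_iff (dP_pos χ p.1 hχ p.2.1 i).ne' |>.mp h1
      exact norm_eq_zero.mp h2
  have hKne : K.Nonempty := by
    obtain ⟨j, hj⟩ := sph_exists_ne (V p₀)
    exact ⟨j, (hKmem j).mpr (norm_ne_zero_iff.mpr hj)⟩
  obtain ⟨j₀, hj₀K⟩ := hKne
  -- global constants
  set lcmv : ℕ := Finset.univ.lcm χ with hlcmv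
  have hlcmne : lcmv ≠ 0 := by
    rw [hlcmv, lcm_eq χ p₀.1 hχ p₀.2.1]
    have := Lp_pos χ p₀.1 hχ p₀.2.1
    have := pow_pos p₀.2.1.pos (Ap χ p₀.1)
    positivity
  have hlcmr : ((lcmv : ℕ) : ℝ) ≠ 0 := by exact_mod_cast hlcmne
  -- the magnitude vector
  set b : Fin m → ℝ := fun i => (R i ^ ((χ i : ℝ) / (lcmv : ℝ))) ^ 2 with hb
  have hbnn : ∀ i, 0 ≤ b i := fun i => sq_nonneg _
  have hbj : 0 < b j₀ := by
    rw [hb]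
    have h0 : 0 < R j₀ := lt_of_le_of_ne (hRnn j₀) (Ne.symm ((hKmem j₀).mp hj₀K))
    have := Real.rpow_pos_of_pos h0 ((χ j₀ : ℝ) / (lcmv : ℝ))
    positivity
  obtain ⟨ρ, hρpos, hρsum⟩ := sumpow_exists
    (e := fun i => 2 * χ i)
    (fun i => le_trans (hχ i) (Nat.le_mul_of_pos_left _ (by norm_num))) hbnn hbj
  set r : Fin m → ℝ := fun i => ρ ^ χ i * R i ^ ((χ i : ℝ) / (lcmv : ℝ)) with hr
  have hrnn : ∀ i, 0 ≤ r i :=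
    fun i => mul_nonneg (pow_nonneg hρpos.le _) (Real.rpow_nonneg (hRnn i) _)
  -- phases
  choose g hg using fun i => abs_unit_decomp (y := (V p₀ : Fin m → ℂ) i)
  choose ang hang using fun (p : PrimesOf m χ) i =>
    abs_unit_decomp (y := (y p : Fin m → ℂ) i)
  choose ta hta using fun p => exists_ee (habsτ p)
  have hnnex : ∀ (p : PrimesOf m χ) (i : Fin m), ∃ nv : ℤ, i ∈ K →
      (dP p i : ℝ) * ang p i + ta p - g i = nv := by
    intro p i
    by_cases hiK : i ∈ K
    · have h1 := hτ p i
      rw [hVco p i, hang p i, pow_one, hg i] at h1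
      rw [mul_pow, ← Complex.ofReal_pow, hta p] at h1
      have h2 : (‖(V p₀ : Fin m → ℂ) i‖ : ℂ) = (R i : ℂ) := by rw [hR]
      rw [h2] at h1
      have hRC : (R i : ℂ) ≠ 0 := by
        exact_mod_cast (hKmem i).mp hiK
      rw [ee_pow] at h1
      -- h1 : (R i) * ee (g i) = ee (ta p) * ((l2 p) * ((|y|^dP) * ee (dP * ang)))
      have h3 : ((l2 p : ℝ) : ℂ) * ((‖(y p : Fin m → ℂ) i‖ : ℝ) : ℂ) ^ dP p i
          = (R i : ℂ) := by
        have h3x := congrArg (fun t : ℝ => (t : ℂ)) (hRy p i).symm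
        push_cast at h3x
        exact h3x
      have h4 : (R i : ℂ) * ee (g i) = (R i : ℂ) * (ee (ta p) * ee ((dP p i : ℝ) * ang p i)) := by
        rw [h1]
        push_cast
        linear_combination (ee (ta p) * ee ((dP p i : ℝ) * ang p i)) * h3
      have h5 := mul_left_cancel₀ hRC h4
      rw [← ee_add] at h5
      rw [ee_eq_ee_iff] at h5
      obtain ⟨k, hk⟩ := h5
      exact ⟨-k, fun _ => by push_cast; linarith [hk]⟩
    · exact ⟨0, fun h => absurd h hiK⟩
  choose nn hnn using hnnex
  -- CRT
  have hcex : ∀ i : Fin m, ∃ c : ℤ, ∀ q (hq : q ∈ Qs χ),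
      (q : ℤ) ^ (Ap χ q - (χ i).factorization q) ∣ c - nn ⟨q, (mem_Qs χ hχ).mp hq⟩ i := by
    intro i
    obtain ⟨c, hc⟩ := crt (Qs χ) (fun q => (q : ℤ) ^ (Ap χ q - (χ i).factorization q))
      (fun q => if hq : q ∈ Qs χ then nn ⟨q, (mem_Qs χ hχ).mp hq⟩ i else 0)
      (pairwise_coprime_Qs χ hχ _)
    refine ⟨c, fun q hq => ?_⟩
    have := hc q hq
    rw [dif_pos hq] at this
    exact this
  choose c hc using hcex
  -- the phases of z
  set θ : Fin m → ℝ := fun i => (χ i : ℝ) * (g i + (c i : ℝ)) / (lcmv : ℝ) with hθ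
  -- the point z
  have hzsum : ∑ i, ‖(r i : ℂ) * ee (θ i)‖ ^ 2 = 1 := by
    have h1 : ∀ i, ‖(r i : ℂ) * ee (θ i)‖ ^ 2 = ρ ^ (2 * χ i) * b i := by
      intro i
      rw [norm_mul, abs_ee, mul_one, Complex.norm_real, Real.norm_eq_abs, _root_.abs_of_nonneg (hrnn i), hr, hb,
        mul_pow, ← pow_mul, mul_comm (χ i) 2]
    simp only [h1]
    exact hρsum
  set z : Sph m := ⟨fun i => (r i : ℂ) * ee (θ i), hzsum⟩ with hzdef
  refine ⟨z, fun p => ?_⟩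
  -- constants for this prime
  set s' : ℕ := p.1 ^ Ap χ p.1 with hs'
  have hs'pos : 0 < s' := pow_pos p.2.1.pos _
  have hs'r : ((s' : ℕ) : ℝ) ≠ 0 := by positivity
  set σ : ℝ := ta p / (s' : ℝ) with hσ
  set ν : ℝ := ρ ^ Lp χ p.1 * (l2 p) ^ ((1 : ℝ) / (s' : ℝ)) with hν
  have hνpos : 0 < ν := by
    rw [hν]
    have := Real.rpow_pos_of_pos (hl2 p) ((1 : ℝ) / (s' : ℝ))
    positivity
  have hLpne : (Lp χ p.1 : ℝ) ≠ 0 := by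
    have := Lp_pos χ p.1 hχ p.2.1
    positivity
  have hlcm_eq : ((lcmv : ℕ) : ℝ) = (Lp χ p.1 : ℝ) * (s' : ℝ) := by
    rw [hlcmv, lcm_eq χ p.1 hχ p.2.1, hs']
    push_cast
    ring
  have hchidE : ∀ i, ((χ i : ℕ) : ℝ) * (dE p i : ℝ)
      = (Lp χ p.1 : ℝ) * (pCont m p.1 χ i : ℝ) := by
    intro i
    have h1 : ((dE p i * χ i : ℕ) : ℝ) = ((Lp χ p.1 * pCont m p.1 χ i : ℕ) : ℝ) := by
      rw [hdE, dE_mul_chi χ p.1 hχ p.2.1 i, pCont_def]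
    push_cast at h1
    linarith [h1]
  have hdPome : ∀ i, (dP p i : ℝ) * (pCont m p.1 χ i : ℝ) = (s' : ℝ) := by
    intro i
    have h1 : ((dP p i * pCont m p.1 χ i : ℕ) : ℝ) = ((s' : ℕ) : ℝ) := by
      rw [hdP, hs', pCont_def, dP_mul_pow χ p.1 hχ p.2.1 i]
    push_cast at h1
    linarith [h1]
  -- the real magnitude identity
  have rmag : ∀ i, r i ^ dE p i = ν ^ pCont m p.1 χ i * ‖(y p : Fin m → ℂ) i‖ := by
    intro i
    have hynn : (0:ℝ) ≤ ‖(y p : Fin m → ℂ) i‖ := norm_nonneg _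
    have hstep1 : (R i ^ ((χ i : ℝ) / (lcmv : ℝ))) ^ dE p i
        = R i ^ ((pCont m p.1 χ i : ℝ) / (s' : ℝ)) := by
      rw [← Real.rpow_natCast (R i ^ ((χ i : ℝ) / (lcmv : ℝ))) (dE p i),
        ← Real.rpow_mul (hRnn i)]
      congr 1
      field_simp
      linear_combination ((s' : ℝ)) * hchidE i - ((pCont m p.1 χ i : ℝ)) * hlcm_eq
    have hstep2 : R i ^ ((pCont m p.1 χ i : ℝ) / (s' : ℝ))
        = (l2 p) ^ ((pCont m p.1 χ i : ℝ) / (s' : ℝ)) * ‖(y p : Fin m → ℂ) i‖ := by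
      rw [hRy p i, Real.mul_rpow (hl2 p).le (pow_nonneg hynn _),
        ← Real.rpow_natCast (‖(y p : Fin m → ℂ) i‖) (dP p i),
        ← Real.rpow_mul hynn]
      congr 1
      rw [show (dP p i : ℝ) * ((pCont m p.1 χ i : ℝ) / (s' : ℝ))
          = ((dP p i : ℝ) * (pCont m p.1 χ i : ℝ)) / (s' : ℝ) by ring, hdPome i,
        div_self hs'r, Real.rpow_one]
    have hstep3 : (ρ ^ χ i) ^ dE p i = (ρ ^ Lp χ p.1) ^ pCont m p.1 χ i := by
      rw [← pow_mul, ← pow_mul]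
      congr 1
      have h1 : dE p i * χ i = Lp χ p.1 * pCont m p.1 χ i := by
        rw [hdE, dE_mul_chi χ p.1 hχ p.2.1 i, pCont_def]
      calc χ i * dE p i = dE p i * χ i := mul_comm _ _
        _ = Lp χ p.1 * pCont m p.1 χ i := h1
    have hstep4 : ((l2 p) ^ ((1 : ℝ) / (s' : ℝ))) ^ pCont m p.1 χ i
        = (l2 p) ^ ((pCont m p.1 χ i : ℝ) / (s' : ℝ)) := by
      rw [← Real.rpow_natCast ((l2 p) ^ ((1 : ℝ) / (s' : ℝ))) (pCont m p.1 χ i),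
        ← Real.rpow_mul (hl2 p).le]
      congr 1
      ring
    rw [hr, mul_pow, hstep1, hstep2, hstep3, hν, mul_pow, hstep4]
    ring
  -- the target representative
  have hwsum : ∑ i, ‖ee σ ^ pCont m p.1 χ i * (y p : Fin m → ℂ) i‖ ^ 2 = 1 := by
    have h1 : ∀ i, ‖ee σ ^ pCont m p.1 χ i * (y p : Fin m → ℂ) i‖ ^ 2
        = ‖(y p : Fin m → ℂ) i‖ ^ 2 := by
      intro i
      rw [norm_mul, norm_pow, abs_ee, one_pow, one_mul]
    simp only [h1]
    exact (y p).2
  set w : Sph m := ⟨fun i => ee σ ^ pCont m p.1 χ i * (y p : Fin m → ℂ) i, hwsum⟩ with hwdef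
  -- the coordinate identity
  have hCI : ∀ i, (w : Fin m → ℂ) i
      = ((1 / ν : ℝ) : ℂ) ^ pCont m p.1 χ i * ((z : Fin m → ℂ) i) ^ dE p i := by
    intro i
    have hzi : (z : Fin m → ℂ) i = (r i : ℂ) * ee (θ i) := rfl
    have hwi : (w : Fin m → ℂ) i = ee σ ^ pCont m p.1 χ i * (y p : Fin m → ℂ) i := rfl
    rw [hzi, hwi, mul_pow]
    have hrpow : ((r i : ℝ) : ℂ) ^ dE p i
        = ((ν ^ pCont m p.1 χ i * ‖(y p : Fin m → ℂ) i‖ : ℝ) : ℂ) := by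
      rw [← Complex.ofReal_pow, rmag i]
    rw [hrpow]
    by_cases hiK : i ∈ K
    · -- phase identity
      obtain ⟨k, hk⟩ : ((p.1 : ℤ) ^ (Ap χ p.1 - (χ i).factorization p.1)) ∣
          c i - nn p i := by
        have hqQ : p.1 ∈ Qs χ := (mem_Qs χ hχ).mpr ⟨p.2.1, p.2.2⟩
        have := hc i p.1 hqQ
        have hsub : (⟨p.1, (mem_Qs χ hχ).mp hqQ⟩ : PrimesOf m χ) = p := Subtype.ext rfl
        rw [hsub] at this
        exact this
      have hdPn : dP p i = p.1 ^ (Ap χ p.1 - (χ i).factorization p.1) :=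
        dP_eq χ p.1 hχ p.2.1 i
      have hdPcast : (dP p i : ℝ) = ((p.1 : ℝ)) ^ (Ap χ p.1 - (χ i).factorization p.1) := by
        rw [hdPn]
        push_cast
        ring
      have hkr : (c i : ℝ) - (nn p i : ℝ) = (dP p i : ℝ) * (k : ℝ) := by
        rw [hdPcast]
        exact_mod_cast congrArg Int.cast hk
      have hgEq : g i = (dP p i : ℝ) * ang p i + ta p - (nn p i : ℝ) := by
        have := hnn p i hiK
        linarith
      have hTI : (dE p i : ℝ) * θ i
          = ang p i + (pCont m p.1 χ i : ℝ) * σ + (k : ℝ) := by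
        rw [hθ, hσ]
        simp only []
        rw [hgEq]
        field_simp
        linear_combination
          ((s' : ℝ) * ((dP p i : ℝ) * ang p i + ta p - (nn p i : ℝ) + (c i : ℝ))) * hchidE i
          - (ang p i * (s' : ℝ) + (pCont m p.1 χ i : ℝ) * ta p + (s' : ℝ) * (k : ℝ)) * hlcm_eq
          + ((Lp χ p.1 : ℝ) * (s' : ℝ) * ang p i) * hdPome i
          + ((Lp χ p.1 : ℝ) * (s' : ℝ) * (pCont m p.1 χ i : ℝ)) * hkr
          + ((Lp χ p.1 : ℝ) * (s' : ℝ) * (k : ℝ)) * hdPome i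
      have hphase : ee (θ i) ^ dE p i = ee (ang p i) * ee σ ^ pCont m p.1 χ i := by
        rw [ee_pow, hTI, ee_add, ee_add, ee_int k, mul_one, ← ee_pow]
      rw [hphase, hang p i]
      push_cast
      have hνC : (ν : ℂ) ≠ 0 := by exact_mod_cast hνpos.ne'
      field_simp
      simp only [norm_mul, Complex.norm_real, norm_norm, abs_ee, mul_one]
      have hνk : (ν : ℂ) ^ pCont m p.1 χ i * (ν : ℂ)⁻¹ ^ pCont m p.1 χ i = 1 := by
        rw [← mul_pow, mul_inv_cancel₀ hνC, one_pow]
      linear_combination (-(ee σ ^ pCont m p.1 χ i * (‖(y p : Fin m → ℂ) i‖ : ℂ) * ee (ang p i))) * hνk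
    · -- both sides vanish
      have hy0 : (y p : Fin m → ℂ) i = 0 := by
        by_contra h0
        exact hiK ((hKy p i).mpr h0)
      rw [hy0, mul_zero, norm_zero, mul_zero]
      push_cast
      ring
  -- conclude
  have hIsN : IsNorm m (pCont m p.1 χ) (powVec m (dExp m (pCont m p.1 χ) χ) z) w := by
    refine ⟨1 / ν, by positivity, fun i => ?_⟩
    rw [hCI i]
    rfl
  calc E p (wpMk m χ z) = wpMk m (pCont m p.1 χ) w := (hE p).2 z w hIsN
    _ = wpMk m (pCont m p.1 χ) (y p) := by
        symm
        apply Quot.sound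
        exact ⟨ee σ, abs_ee σ, fun i => rfl⟩
    _ = u p := hy p

end St10

/-- `P(χ)`, with the extraction maps `e((p)χ/χ)`, is the limit of the
diagram of the maps `e(1/(p)χ) : P((p)χ) → ℂP^n` over the primes `p ∈ Q(χ)`: the map
with components `e((p)χ/χ)` is a homeomorphism onto the subspace of the product consisting
of tuples with a common image in `ℂP^n`. -/
theorem statement10 (n : ℕ) (hn : 1 ≤ n) (χ : Fin (n + 1) → ℕ) (hχ : ∀ i, 1 ≤ χ i)
    (hQ : Nonempty (PrimesOf (n + 1) χ))
    (E : ∀ p : PrimesOf (n + 1) χ, WP (n + 1) χ → WP (n + 1) (pCont (n + 1) p.1 χ))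
    (hE : ∀ p, IsEMap (n + 1) (pCont (n + 1) p.1 χ) χ (E p))
    (Pj : ∀ p : PrimesOf (n + 1) χ, WP (n + 1) (pCont (n + 1) p.1 χ) → WP (n + 1) (fun _ => 1))
    (hPj : ∀ p, IsEMap (n + 1) (fun _ => 1) (pCont (n + 1) p.1 χ) (Pj p)) :
    ∃ F : WP (n + 1) χ ≃ₜ
        {u : ∀ p : PrimesOf (n + 1) χ, WP (n + 1) (pCont (n + 1) p.1 χ) //
          ∀ p q, Pj p (u p) = Pj q (u q)},
      ∀ (x : WP (n + 1) χ) (p : PrimesOf (n + 1) χ),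
        (F x : ∀ p : PrimesOf (n + 1) χ, WP (n + 1) (pCont (n + 1) p.1 χ)) p = E p x := by
  classical
  have hcompat : ∀ (x : WP (n+1) χ) (p q : PrimesOf (n+1) χ), Pj p (E p x) = Pj q (E q x) :=
    fun x p q => St10.compat_lemma hχ p.2.1 q.2.1 (hE p) (hPj p) (hE q) (hPj q) x
  set F0 : WP (n+1) χ →
      {u : ∀ p : PrimesOf (n + 1) χ, WP (n + 1) (pCont (n + 1) p.1 χ) //
        ∀ p q, Pj p (u p) = Pj q (u q)} :=
    fun x => ⟨fun p => E p x, fun p q => hcompat x p q⟩ with hF0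
  have hinj : Function.Injective F0 := by
    intro a b hab
    obtain ⟨z, rfl⟩ := Quot.exists_rep a
    obtain ⟨z', rfl⟩ := Quot.exists_rep b
    apply St10.inj_lemma hχ hQ E hE z z'
    intro p
    exact congrFun (congrArg Subtype.val hab) p
  have hsurj : Function.Surjective F0 := by
    intro u
    obtain ⟨z, hz⟩ := St10.surj_lemma hχ hQ E hE Pj hPj u.1 u.2
    exact ⟨wpMk (n+1) χ z, Subtype.ext (funext fun p => hz p)⟩
  have hcont : Continuous F0 := by
    apply Continuous.subtype_mk
    exact continuous_pi fun p => (hE p).1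
  let eqv := Equiv.ofBijective F0 ⟨hinj, hsurj⟩
  have hconte : Continuous eqv := hcont
  exact ⟨hconte.homeoOfEquivCompactToT2, fun x p => rfl⟩
end
end

section
/- Let χ be a weight vector and let Q(χ) = {p_1, …, p_m} be the set of primes dividing at least one coordinate χ_i, with p-contents (p_i)χ. Let R be the quotient of the disjoint union ⊔_{i=1}^{m} P((p_i)χ) by the equivalence relation generated by e((p_i)χ/1)(z) ∼ e((p_j)χ/1)(z) for all z ∈ ℂP^n and all 1 ≤ i, j ≤ m, with the quotient topology. Then the map R → P(χ) induced by the maps e(χ/(p_i)χ) is well defined and a homeomorphism. That is, P(χ), together with the maps e(χ/(p_i)χ), is the colimit of the diagram of maps e((p_i)χ/1) : ℂP^n → P((p_i)χ). -/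
noncomputable section

variable {m : ℕ}

lemma sph_exists_ne_zero (z : Sph m) : ∃ i, (z : Fin m → ℂ) i ≠ 0 := by
  by_contra h
  push_neg at h
  have h2 := z.2
  simp only [h, norm_zero] at h2
  simp at h2

lemma wRel_refl (χ : Fin m → ℕ) (z : Sph m) : wRel m χ z z :=
  ⟨1, by simp, fun i => by simp⟩

lemma wRel_symm {χ : Fin m → ℕ} {z w : Sph m} (h : wRel m χ z w) : wRel m χ w z := by
  obtain ⟨t, ht, hw⟩ := h
  have ht0 : t ≠ 0 := fun h0 => by simp [h0] at ht
  refine ⟨t⁻¹, by simp [ht], fun i => ?_⟩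
  rw [hw i, inv_pow]
  field_simp

lemma wRel_trans {χ : Fin m → ℕ} {x y z : Sph m} (h : wRel m χ x y) (h' : wRel m χ y z) :
    wRel m χ x z := by
  obtain ⟨t, ht, hy⟩ := h
  obtain ⟨s, hs, hz⟩ := h'
  refine ⟨s * t, by simp [ht, hs], fun i => ?_⟩
  rw [hz i, hy i, mul_pow]
  ring

lemma wRel_equiv (χ : Fin m → ℕ) : Equivalence (wRel m χ) :=
  ⟨wRel_refl χ, wRel_symm, wRel_trans⟩

lemma wpMk_eq_iff {χ : Fin m → ℕ} {z w : Sph m} :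
    wpMk m χ z = wpMk m χ w ↔ wRel m χ z w := by
  constructor
  · intro h
    exact ((wRel_equiv χ).eqvGen_iff).mp (Quot.eqvGen_exact h)
  · exact Quot.sound

lemma exists_sum_pow_eq_one (g : Fin m → ℝ) (k : Fin m → ℕ)
    (hg : ∀ i, 0 ≤ g i) (hne : ∃ i, 0 < g i) (hk : ∀ i, 1 ≤ k i) :
    ∃ l : ℝ, 0 < l ∧ ∑ i, g i * l ^ k i = 1 := by
  obtain ⟨j, hj⟩ := hne
  set M : ℝ := max 1 (1 / g j) with hM
  have hM1 : (1 : ℝ) ≤ M := le_max_left _ _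
  have hM0 : (0 : ℝ) ≤ M := by linarith
  have hcont : Continuous (fun l : ℝ => ∑ i, g i * l ^ k i) := by
    apply continuous_finset_sum
    intro i _
    exact continuous_const.mul (continuous_pow _)
  have h0 : ∑ i, g i * (0:ℝ) ^ k i = 0 := by
    apply Finset.sum_eq_zero
    intro i _
    rw [zero_pow (by have := hk i; omega), mul_zero]
  have hMval : 1 ≤ ∑ i, g i * M ^ k i := by
    have h1 : (1 : ℝ) ≤ g j * M ^ k j := by
      have h2 : 1 / g j ≤ M := le_max_right _ _
      have h3 : M ≤ M ^ k j := le_self_pow₀ hM1 (by have := hk j; omega)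
      calc (1 : ℝ) = g j * (1 / g j) := by field_simp
      _ ≤ g j * M := by nlinarith
      _ ≤ g j * M ^ k j := by nlinarith
    calc (1:ℝ) ≤ g j * M ^ k j := h1
    _ ≤ ∑ i, g i * M ^ k i := Finset.single_le_sum
        (fun i _ => mul_nonneg (hg i) (pow_nonneg hM0 _)) (Finset.mem_univ j)
  have := intermediate_value_Icc hM0 hcont.continuousOn
  have hmem : (1:ℝ) ∈ Set.Icc (∑ i, g i * (0:ℝ) ^ k i) (∑ i, g i * M ^ k i) := by
    rw [h0]; exact ⟨zero_le_one, hMval⟩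
  obtain ⟨l, hl, hfl⟩ := this hmem
  refine ⟨l, ?_, hfl⟩
  rcases eq_or_lt_of_le hl.1 with h | h
  · exfalso; rw [← h] at hfl; exact one_ne_zero (hfl.symm.trans h0)
  · exact h

lemma sph_sum_eq {χ : Fin m → ℕ} (v : Fin m → ℂ) (l : ℝ) (hl : 0 < l) (w : Sph m)
    (hw : ∀ i, (w : Fin m → ℂ) i = (l : ℂ) ^ χ i * v i) :
    ∑ i, ‖v i‖ ^ 2 * l ^ (χ i * 2) = 1 := by
  rw [← w.2]
  apply Finset.sum_congr rfl
  intro i _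
  rw [hw i, norm_mul, norm_pow, Complex.norm_real, Real.norm_eq_abs, abs_of_pos hl, mul_pow, pow_mul]
  ring

lemma exists_isNorm (χ : Fin m → ℕ) (hχ : ∀ i, 1 ≤ χ i) (v : Fin m → ℂ)
    (hv : ∃ i, v i ≠ 0) : ∃ w : Sph m, IsNorm m χ v w := by
  obtain ⟨i0, hi0⟩ := hv
  obtain ⟨l, hl, hsum⟩ := exists_sum_pow_eq_one (fun i => ‖v i‖ ^ 2)
    (fun i => χ i * 2) (fun i => by positivity)
    ⟨i0, by exact pow_pos (norm_pos_iff.mpr hi0) 2⟩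
    (fun i => by show 1 ≤ χ i * 2; have := hχ i; omega)
  refine ⟨⟨fun i => (l : ℂ) ^ χ i * v i, ?_⟩, l, hl, fun i => rfl⟩
  rw [← hsum]
  apply Finset.sum_congr rfl
  intro i _
  rw [norm_mul, norm_pow, Complex.norm_real, Real.norm_eq_abs, abs_of_pos hl, mul_pow, pow_mul]
  ring

lemma pow_inj_nonneg {a b : ℝ} (ha : 0 ≤ a) (hb : 0 ≤ b) {k : ℕ} (hk : k ≠ 0)
    (h : a ^ k = b ^ k) : a = b := by
  rcases lt_trichotomy a b with hlt | he | hgt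
  · exact absurd h (ne_of_lt (pow_lt_pow_left₀ hlt ha hk))
  · exact he
  · exact absurd h.symm (ne_of_lt (pow_lt_pow_left₀ hgt hb hk))

lemma sum_pow_strictMono {g : Fin m → ℝ} {k : Fin m → ℕ} (hg : ∀ i, 0 ≤ g i)
    (hne : ∃ i, 0 < g i) (hk : ∀ i, 1 ≤ k i) {a b : ℝ} (ha : 0 ≤ a) (hab : a < b) :
    ∑ i, g i * a ^ k i < ∑ i, g i * b ^ k i := by
  obtain ⟨j, hj⟩ := hne
  apply Finset.sum_lt_sum
  · intro i _
    exact mul_le_mul_of_nonneg_left (pow_le_pow_left₀ ha hab.le _) (hg i)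
  · exact ⟨j, Finset.mem_univ j, mul_lt_mul_of_pos_left
      (pow_lt_pow_left₀ hab ha (by have := hk j; omega)) hj⟩

lemma isNorm_unique {χ : Fin m → ℕ} (hχ : ∀ i, 1 ≤ χ i) {v : Fin m → ℂ}
    (hv : ∃ i, v i ≠ 0) {w w' : Sph m} (h : IsNorm m χ v w) (h' : IsNorm m χ v w') :
    w = w' := by
  obtain ⟨l, hl, hw⟩ := h
  obtain ⟨l', hl', hw'⟩ := h'
  obtain ⟨i0, hi0⟩ := hv
  have hsum := sph_sum_eq v l hl w hw
  have hsum' := sph_sum_eq v l' hl' w' hw'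
  have hgpos : (0:ℝ) < ‖v i0‖ ^ 2 := by exact pow_pos (norm_pos_iff.mpr hi0) 2
  have hll : l = l' := by
    by_contra hne
    rcases lt_or_gt_of_ne hne with hlt | hgt
    · have := sum_pow_strictMono (g := fun i => ‖v i‖ ^ 2)
        (k := fun i => χ i * 2) (fun i => by positivity) ⟨i0, hgpos⟩
        (fun i => by show 1 ≤ χ i * 2; have := hχ i; omega) hl.le hlt
      rw [hsum, hsum'] at this; exact lt_irrefl _ this
    · have := sum_pow_strictMono (g := fun i => ‖v i‖ ^ 2)
        (k := fun i => χ i * 2) (fun i => by positivity) ⟨i0, hgpos⟩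
        (fun i => by show 1 ≤ χ i * 2; have := hχ i; omega) hl'.le hgt
      rw [hsum, hsum'] at this; exact lt_irrefl _ this
  exact Subtype.ext (funext fun i => by rw [hw i, hw' i, hll])

lemma abs_eq_one_of (z w : Sph m) (k : Fin m → ℕ) (hk : ∀ i, 1 ≤ k i) (r : ℝ) (hr : 0 ≤ r)
    (h : ∀ i, ‖(w : Fin m → ℂ) i‖ = r ^ k i * ‖(z : Fin m → ℂ) i‖) :
    r = 1 := by
  rcases lt_trichotomy r 1 with hlt | he | hgt
  · exfalso
    have hle : ∑ i, ‖(w : Fin m → ℂ) i‖ ^ 2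
        ≤ r ^ 2 * ∑ i, ‖(z : Fin m → ℂ) i‖ ^ 2 := by
      rw [Finset.mul_sum]
      apply Finset.sum_le_sum
      intro i _
      rw [h i, mul_pow, ← pow_mul]
      apply mul_le_mul_of_nonneg_right _ (by positivity)
      exact pow_le_pow_of_le_one hr hlt.le (by have := hk i; omega)
    rw [z.2, w.2, mul_one] at hle
    nlinarith
  · exact he
  · exfalso
    have hge : r ^ 2 * ∑ i, ‖(z : Fin m → ℂ) i‖ ^ 2
        ≤ ∑ i, ‖(w : Fin m → ℂ) i‖ ^ 2 := by
      rw [Finset.mul_sum]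
      apply Finset.sum_le_sum
      intro i _
      rw [h i, mul_pow, ← pow_mul]
      apply mul_le_mul_of_nonneg_right _ (by positivity)
      exact pow_le_pow_right₀ hgt.le (by have := hk i; omega)
    rw [z.2, w.2, mul_one] at hge
    nlinarith

lemma sVal_eq_one {χ ω : Fin m → ℕ} (h : ∀ i, ω i ∣ χ i) : sVal m χ ω = 1 := by
  have h1 : (1 : ℕ) ∈ {s : ℕ | 0 < s ∧ ∀ i, ω i ∣ s * χ i} :=
    ⟨one_pos, fun i => by simpa using h i⟩
  have hle := Nat.sInf_le h1
  have hmem := Nat.sInf_mem (⟨1, h1⟩ : Set.Nonempty _)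
  exact le_antisymm hle hmem.1

lemma dExp_J (p : ℕ) (χ : Fin m → ℕ) (i : Fin m) :
    dExp m χ (pCont m p χ) i = ordCompl[p] (χ i) := by
  unfold dExp pCont
  rw [sVal_eq_one (fun j => Nat.ordProj_dvd _ _), one_mul]

lemma dExp_Ins (ω : Fin m → ℕ) (i : Fin m) : dExp m ω (fun _ => 1) i = ω i := by
  unfold dExp
  rw [sVal_eq_one (fun j => one_dvd _), one_mul, Nat.div_one]

lemma emap_eq_iff {χ ω : Fin m → ℕ} (hχ : ∀ i, 1 ≤ χ i) {e : WP m ω → WP m χ}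
    (he : IsEMap m χ ω e) (hd : ∀ i, 1 ≤ dExp m χ ω i) (z w : Sph m) :
    e (wpMk m ω z) = wpMk m χ w ↔
      ∃ c : ℂ, c ≠ 0 ∧ ∀ i, (w : Fin m → ℂ) i = c ^ χ i * (z : Fin m → ℂ) i ^ dExp m χ ω i := by
  obtain ⟨i0, hi0⟩ := sph_exists_ne_zero z
  have hv : ∃ i, powVec m (dExp m χ ω) z i ≠ 0 := ⟨i0, pow_ne_zero _ hi0⟩
  obtain ⟨w0, hw0⟩ := exists_isNorm χ hχ _ hv
  obtain ⟨l, hl, hw0e⟩ := hw0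
  rw [he.2 z w0 ⟨l, hl, hw0e⟩, wpMk_eq_iff]
  have hl0 : (l : ℂ) ≠ 0 := by exact_mod_cast hl.ne'
  constructor
  · rintro ⟨t, ht, hw⟩
    have ht0 : t ≠ 0 := fun h0 => by simp [h0] at ht
    refine ⟨t * l, mul_ne_zero ht0 hl0, fun i => ?_⟩
    rw [hw i, hw0e i, mul_pow]
    unfold powVec
    ring
  · rintro ⟨c, hc, hw⟩
    have habs : ‖c‖ / l = 1 := by
      apply abs_eq_one_of w0 w χ hχ _ (by positivity)
      intro i
      rw [hw i, hw0e i]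
      unfold powVec
      rw [norm_mul, norm_mul, norm_pow, norm_pow, norm_pow, Complex.norm_real, Real.norm_eq_abs,
        abs_of_pos hl, div_pow]
      field_simp
    refine ⟨c * (l : ℂ)⁻¹, ?_, fun i => ?_⟩
    · rw [norm_mul, norm_inv, Complex.norm_real, Real.norm_eq_abs, abs_of_pos hl]
      exact habs
    · rw [hw0e i, hw i]
      unfold powVec
      rw [mul_pow, inv_pow]
      field_simp

lemma emap_surj {χ : Fin m → ℕ} (d kk : Fin m → ℕ) (hd : ∀ i, 1 ≤ d i) (hkk : ∀ i, 1 ≤ kk i)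
    (hfac : ∀ i, χ i = kk i * d i) (w : Sph m) :
    ∃ (z : Sph m) (μ : ℝ), 0 < μ ∧
      ∀ i, (w : Fin m → ℂ) i = (μ : ℂ) ^ χ i * (z : Fin m → ℂ) i ^ d i := by
  have hroot : ∀ i, ∃ ρ : ℂ, ρ ^ d i = (w : Fin m → ℂ) i := fun i =>
    IsAlgClosed.exists_pow_nat_eq _ (hd i)
  choose ρ hρ using hroot
  obtain ⟨i0, hi0⟩ := sph_exists_ne_zero w
  have hρ0 : ρ i0 ≠ 0 := by
    intro h
    rw [← hρ i0, h, zero_pow (by have := hd i0; omega)] at hi0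
    exact hi0 rfl
  obtain ⟨ν, hν, hsum⟩ := exists_sum_pow_eq_one (fun i => ‖ρ i‖ ^ 2)
    (fun i => kk i * 2) (fun i => by positivity)
    ⟨i0, by exact pow_pos (norm_pos_iff.mpr hρ0) 2⟩
    (fun i => by show 1 ≤ kk i * 2; have := hkk i; omega)
  have hν0 : (ν : ℂ) ≠ 0 := by exact_mod_cast hν.ne'
  refine ⟨⟨fun i => (ν : ℂ) ^ kk i * ρ i, ?_⟩, ν⁻¹, by positivity, fun i => ?_⟩
  · rw [← hsum]
    apply Finset.sum_congr rfl
    intro i _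
    rw [norm_mul, norm_pow, Complex.norm_real, Real.norm_eq_abs, abs_of_pos hν, mul_pow, pow_mul]
    ring
  · show (w : Fin m → ℂ) i = ((ν⁻¹ : ℝ) : ℂ) ^ χ i * ((ν : ℂ) ^ kk i * ρ i) ^ d i
    rw [← hρ i, mul_pow, ← pow_mul, ← hfac i, Complex.ofReal_inv, inv_pow]
    rw [inv_mul_cancel_left₀ (pow_ne_zero _ hν0)]

section Main

variable {χ : Fin m → ℕ}

lemma pCont_pos (p : PrimesOf m χ) (i : Fin m) : 1 ≤ pCont m p.1 χ i :=
  Nat.one_le_iff_ne_zero.mpr (pow_ne_zero _ p.2.1.pos.ne')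

lemma ordCompl_pos' (hχ : ∀ i, 1 ≤ χ i) (p : PrimesOf m χ) (i : Fin m) :
    1 ≤ ordCompl[p.1] (χ i) :=
  Nat.ordCompl_pos p.1 (by have := hχ i; omega)

lemma chi_fac (hχ : ∀ i, 1 ≤ χ i) (p : PrimesOf m χ) (i : Fin m) :
    χ i = pCont m p.1 χ i * ordCompl[p.1] (χ i) :=
  (Nat.ordProj_mul_ordCompl_eq_self (χ i) p.1).symm

variable (Ins : ∀ p : PrimesOf m χ, WP m (fun _ => 1) → WP m (pCont m p.1 χ))
variable (J : ∀ p : PrimesOf m χ, WP m (pCont m p.1 χ) → WP m χ)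

lemma J_eq_iff (hχ : ∀ i, 1 ≤ χ i) (hJ : ∀ p, IsEMap m χ (pCont m p.1 χ) (J p))
    (p : PrimesOf m χ) (z w : Sph m) :
    J p (wpMk m (pCont m p.1 χ) z) = wpMk m χ w ↔
      ∃ c : ℂ, c ≠ 0 ∧ ∀ i, (w : Fin m → ℂ) i
        = c ^ χ i * (z : Fin m → ℂ) i ^ (ordCompl[p.1] (χ i)) := by
  rw [emap_eq_iff hχ (hJ p) (fun i => by rw [dExp_J]; exact ordCompl_pos' hχ p i) z w]
  simp only [dExp_J]

lemma Ins_eq_iff (hχ : ∀ i, 1 ≤ χ i)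
    (hIns : ∀ p, IsEMap m (pCont m p.1 χ) (fun _ => 1) (Ins p))
    (p : PrimesOf m χ) (z w : Sph m) :
    Ins p (wpMk m (fun _ => 1) z) = wpMk m (pCont m p.1 χ) w ↔
      ∃ c : ℂ, c ≠ 0 ∧ ∀ i, (w : Fin m → ℂ) i
        = c ^ (pCont m p.1 χ i) * (z : Fin m → ℂ) i ^ (pCont m p.1 χ i) := by
  rw [emap_eq_iff (pCont_pos p) (hIns p)
    (fun i => by rw [dExp_Ins]; exact pCont_pos p i) z w]
  simp only [dExp_Ins]

lemma Ins_surj (hχ : ∀ i, 1 ≤ χ i)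
    (hIns : ∀ p, IsEMap m (pCont m p.1 χ) (fun _ => 1) (Ins p))
    (p : PrimesOf m χ) (w : Sph m) :
    ∃ (u : Sph m) (μ : ℝ), 0 < μ ∧ Ins p (wpMk m (fun _ => 1) u) = wpMk m (pCont m p.1 χ) w ∧
      ∀ i, (w : Fin m → ℂ) i = (μ : ℂ) ^ (pCont m p.1 χ i) * (u : Fin m → ℂ) i ^ (pCont m p.1 χ i) := by
  obtain ⟨u, μ, hμ, hu⟩ := emap_surj (χ := pCont m p.1 χ) (pCont m p.1 χ) (fun _ => 1)
    (pCont_pos p) (fun _ => le_refl 1) (fun i => (one_mul _).symm) w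
  exact ⟨u, μ, hμ, (Ins_eq_iff Ins hχ hIns p u w).mpr
    ⟨(μ : ℂ), by exact_mod_cast hμ.ne', hu⟩, hu⟩

lemma J_surj (hχ : ∀ i, 1 ≤ χ i) (hJ : ∀ p, IsEMap m χ (pCont m p.1 χ) (J p))
    (p : PrimesOf m χ) (w : Sph m) :
    ∃ z : Sph m, J p (wpMk m (pCont m p.1 χ) z) = wpMk m χ w := by
  obtain ⟨z, μ, hμ, hz⟩ := emap_surj (χ := χ) (fun i => ordCompl[p.1] (χ i))
    (pCont m p.1 χ) (fun i => ordCompl_pos' hχ p i) (pCont_pos p) (fun i => chi_fac hχ p i) w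
  exact ⟨z, (J_eq_iff J hχ hJ p z w).mpr ⟨(μ : ℂ), by exact_mod_cast hμ.ne', hz⟩⟩

lemma J_Ins_eq (hχ : ∀ i, 1 ≤ χ i)
    (hIns : ∀ p, IsEMap m (pCont m p.1 χ) (fun _ => 1) (Ins p))
    (hJ : ∀ p, IsEMap m χ (pCont m p.1 χ) (J p))
    (p : PrimesOf m χ) (u : Sph m) (Nu : Sph m)
    (hNu : IsNorm m χ (fun i => (u : Fin m → ℂ) i ^ χ i) Nu) :
    J p (Ins p (wpMk m (fun _ => 1) u)) = wpMk m χ Nu := by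
  obtain ⟨i0, hi0⟩ := sph_exists_ne_zero u
  obtain ⟨z, l, hl, hz⟩ := exists_isNorm (pCont m p.1 χ) (pCont_pos p)
    (fun i => (u : Fin m → ℂ) i ^ (pCont m p.1 χ i)) ⟨i0, pow_ne_zero _ hi0⟩
  have h1 : Ins p (wpMk m (fun _ => 1) u) = wpMk m (pCont m p.1 χ) z := by
    apply (hIns p).2
    refine ⟨l, hl, fun i => ?_⟩
    rw [hz i]
    unfold powVec
    rw [dExp_Ins]
  rw [h1, J_eq_iff J hχ hJ p z Nu]
  obtain ⟨l', hl', hN⟩ := hNu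
  have hl0 : (l : ℂ) ≠ 0 := by exact_mod_cast hl.ne'
  refine ⟨((l' / l : ℝ) : ℂ), by
    simp only [Complex.ofReal_div]
    exact div_ne_zero (by exact_mod_cast hl'.ne') hl0, fun i => ?_⟩
  rw [hN i, hz i, mul_pow, ← pow_mul, ← pow_mul, ← chi_fac hχ p i]
  rw [Complex.ofReal_div, div_pow]
  field_simp

lemma lemB (hχ : ∀ i, 1 ≤ χ i)
    (hIns : ∀ p, IsEMap m (pCont m p.1 χ) (fun _ => 1) (Ins p))
    (S : Finset ℕ) :
    ∀ (p : PrimesOf m χ) (z w : Sph m) (ζ : Fin m → ℂ) (mm : Fin m → ℕ),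
    (∀ i, mm i ∣ ordCompl[p.1] (χ i)) →
    (∀ i r, Nat.Prime r → r ∣ mm i → r ∈ S) →
    (∀ i, ζ i ^ mm i = 1) →
    (∀ i, (w : Fin m → ℂ) i = ζ i * (z : Fin m → ℂ) i) →
    Quot.mk (fun a b : (p : PrimesOf m χ) × WP m (pCont m p.1 χ) =>
        ∃ (p q : PrimesOf m χ) (x : WP m (fun _ => 1)),
          a = ⟨p, Ins p x⟩ ∧ b = ⟨q, Ins q x⟩)
        ⟨p, wpMk m (pCont m p.1 χ) z⟩ =
      Quot.mk _ ⟨p, wpMk m (pCont m p.1 χ) w⟩ := by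
  induction S using Finset.strongInduction with
  | _ S IH =>
  intro p z w ζ mm hdvd hsupp hord hw
  have hχ0 : ∀ i, χ i ≠ 0 := fun i => by have := hχ i; omega
  have hmm0 : ∀ i, mm i ≠ 0 := by
    intro i h
    have h1 := hdvd i
    rw [h] at h1
    have h2 := Nat.eq_zero_of_zero_dvd h1
    have h3 := ordCompl_pos' hχ p i
    omega
  have hζ0 : ∀ i, ζ i ≠ 0 := fun i h0 => by
    have h1 := hord i; rw [h0, zero_pow (hmm0 i)] at h1; exact one_ne_zero h1.symm
  have hζabs : ∀ i, ‖ζ i‖ = 1 := by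
    intro i
    have h1 : ‖ζ i‖ ^ mm i = 1 := by rw [← norm_pow, hord i, norm_one]
    exact pow_inj_nonneg (norm_nonneg _) zero_le_one (hmm0 i) (by rw [h1, one_pow])
  by_cases hm : ∀ i, mm i = 1
  · have hzw : z = w := by
      apply Subtype.ext; funext i
      have h1 := hord i; rw [hm i, pow_one] at h1
      rw [hw i, h1, one_mul]
    rw [hzw]
  · push_neg at hm
    obtain ⟨i₀, hi₀⟩ := hm
    set q := (mm i₀).minFac with hqdef
    have hq : q.Prime := Nat.minFac_prime hi₀
    have hqm : q ∣ mm i₀ := Nat.minFac_dvd _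
    have hqS : q ∈ S := hsupp i₀ q hq hqm
    have hqχ : q ∣ χ i₀ := (hqm.trans (hdvd i₀)).trans (Nat.ordCompl_dvd (χ i₀) p.1)
    have hqp : q ≠ p.1 := by
      intro h
      have hd : q ∣ ordCompl[p.1] (χ i₀) := hqm.trans (hdvd i₀)
      rw [h] at hd
      exact Nat.not_dvd_ordCompl p.2.1 (hχ0 i₀) hd
    set Q : PrimesOf m χ := ⟨q, hq, i₀, hqχ⟩ with hQdef
    -- arithmetic: choose exponents k i
    have hkex : ∀ i, ∃ k : ℕ, 1 ≤ k ∧ ordCompl[q] (mm i) ∣ k ∧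
        (pCont m p.1 χ i * k) % (q ^ (mm i).factorization q)
          = 1 % (q ^ (mm i).factorization q) := by
      intro i
      by_cases hQ1 : q ^ (mm i).factorization q = 1
      · exact ⟨mm i, by have := hmm0 i; omega, Nat.ordCompl_dvd _ _,
          by rw [hQ1, Nat.mod_one, Nat.mod_one]⟩
      · have hgt : 1 < q ^ (mm i).factorization q := by
          have h1 : q ^ (mm i).factorization q ≠ 0 := pow_ne_zero _ hq.pos.ne'
          omega
        have hcop : Nat.Coprime (pCont m p.1 χ i * ordCompl[q] (mm i))
            (q ^ (mm i).factorization q) := by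
          apply Nat.Coprime.mul
          · apply Nat.Coprime.pow
            exact (Nat.coprime_primes p.2.1 hq).mpr (fun h => hqp h.symm)
          · exact Nat.Coprime.pow_right _
              ((Nat.coprime_ordCompl hq (hmm0 i)).symm)
        obtain ⟨k', -, hk'⟩ := Nat.exists_mul_mod_eq_one_of_coprime hcop hgt
        have hk'0 : k' ≠ 0 := by
          intro h0
          rw [h0, Nat.mul_zero, Nat.zero_mod] at hk'
          omega
        refine ⟨ordCompl[q] (mm i) * k', ?_, Dvd.intro _ rfl, ?_⟩
        · have h1 := Nat.ordCompl_pos q (hmm0 i)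
          have h2 : 1 ≤ k' := by omega
          exact Nat.one_le_iff_ne_zero.mpr (Nat.mul_ne_zero (by omega) hk'0)
        · rw [Nat.mod_eq_of_lt hgt, ← Nat.mul_assoc]
          exact hk'
    choose kf hk1 hkdvd hkmod using hkex
    set η : Fin m → ℂ := fun i => ζ i ^ kf i with hηdef
    have hηabs : ∀ i, ‖η i‖ = 1 := fun i => by
      rw [hηdef]; simp only [norm_pow, hζabs i, one_pow]
    have hηQχ : ∀ i, η i ^ pCont m q χ i = 1 := by
      intro i
      have hQ'dvd : q ^ (mm i).factorization q ∣ pCont m q χ i :=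
        Nat.ordProj_dvd_ordProj_of_dvd (hχ0 i)
          ((hdvd i).trans (Nat.ordCompl_dvd (χ i) p.1)) q
      have hmmdvd : mm i ∣ kf i * pCont m q χ i := by
        have h1 : mm i = q ^ (mm i).factorization q * ordCompl[q] (mm i) :=
          (Nat.ordProj_mul_ordCompl_eq_self (mm i) q).symm
        rw [h1, mul_comm (kf i) (pCont m q χ i)]
        exact mul_dvd_mul hQ'dvd (hkdvd i)
      obtain ⟨t, ht⟩ := hmmdvd
      rw [hηdef]
      simp only
      rw [← pow_mul, ht, pow_mul, hord i, one_pow]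
    -- ζ' decomposition
    set ζ' : Fin m → ℂ := fun i => ζ i / ζ i ^ (pCont m p.1 χ i * kf i) with hζ'def
    have hPk1 : ∀ i, 1 ≤ pCont m p.1 χ i * kf i := fun i =>
      Nat.one_le_iff_ne_zero.mpr (Nat.mul_ne_zero (by have := pCont_pos p i; omega)
        (by have := hk1 i; omega))
    have hstep : ∀ i, ∃ t, ordCompl[q] (mm i) * (pCont m p.1 χ i * kf i)
        = ordCompl[q] (mm i) + mm i * t := by
      intro i
      have hmod : Nat.ModEq (q ^ (mm i).factorization q) 1 (pCont m p.1 χ i * kf i) :=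
        (hkmod i).symm
      have hdvd1 : q ^ (mm i).factorization q ∣ pCont m p.1 χ i * kf i - 1 :=
        (Nat.modEq_iff_dvd' (hPk1 i)).mp hmod
      obtain ⟨s, hs⟩ := hdvd1
      refine ⟨s, ?_⟩
      have h1 : pCont m p.1 χ i * kf i = 1 + q ^ (mm i).factorization q * s := by
        have := hPk1 i; omega
      rw [h1, Nat.mul_add, Nat.mul_one]
      congr 1
      rw [← Nat.mul_assoc, mul_comm (ordCompl[q] (mm i)) (q ^ (mm i).factorization q),
        Nat.ordProj_mul_ordCompl_eq_self]
    have hζ'r : ∀ i, ζ' i ^ (ordCompl[q] (mm i)) = 1 := by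
      intro i
      obtain ⟨t, ht⟩ := hstep i
      rw [hζ'def]
      simp only
      rw [div_pow, ← pow_mul, mul_comm (pCont m p.1 χ i * kf i) (ordCompl[q] (mm i)), ht,
        pow_add, pow_mul, hord i, one_pow, mul_one, div_self (pow_ne_zero _ (hζ0 i))]
    have hdecomp : ∀ i, η i ^ (pCont m p.1 χ i) * ζ' i = ζ i := by
      intro i
      rw [hηdef, hζ'def]
      simp only
      rw [← pow_mul, mul_comm (kf i) (pCont m p.1 χ i)]
      rw [mul_div_cancel₀ _ (pow_ne_zero _ (hζ0 i))]
    -- geometry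
    obtain ⟨u, μ, hμ, hInsu, hu⟩ := Ins_surj Ins hχ hIns p z
    set u' : Sph m := ⟨fun i => η i * (u : Fin m → ℂ) i, by
      refine Eq.trans (Finset.sum_congr rfl fun i _ => ?_) u.2
      show ‖η i * (u : Fin m → ℂ) i‖ ^ 2 = _
      rw [norm_mul, hηabs i, one_mul]⟩ with hu'def
    set z'' : Sph m := ⟨fun i => η i ^ (pCont m p.1 χ i) * (z : Fin m → ℂ) i, by
      refine Eq.trans (Finset.sum_congr rfl fun i _ => ?_) z.2
      show ‖η i ^ (pCont m p.1 χ i) * (z : Fin m → ℂ) i‖ ^ 2 = _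
      rw [norm_mul, norm_pow, hηabs i, one_pow, one_mul]⟩ with hz''def
    have hμ0 : (μ : ℂ) ≠ 0 := by exact_mod_cast hμ.ne'
    have hInsu' : Ins p (wpMk m (fun _ => 1) u') = wpMk m (pCont m p.1 χ) z'' := by
      rw [Ins_eq_iff Ins hχ hIns p u' z'']
      refine ⟨(μ : ℂ), hμ0, fun i => ?_⟩
      show η i ^ (pCont m p.1 χ i) * (z : Fin m → ℂ) i
        = (μ : ℂ) ^ (pCont m p.1 χ i) * (η i * (u : Fin m → ℂ) i) ^ (pCont m p.1 χ i)
      rw [hu i, mul_pow]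
      ring
    have hQeq : Ins Q (wpMk m (fun _ => 1) u) = Ins Q (wpMk m (fun _ => 1) u') := by
      obtain ⟨i0, hi0⟩ := sph_exists_ne_zero u
      obtain ⟨vq, hvq⟩ := exists_isNorm (pCont m q χ) (pCont_pos Q)
        (fun i => (u : Fin m → ℂ) i ^ (pCont m q χ i)) ⟨i0, pow_ne_zero _ hi0⟩
      obtain ⟨l, hl, hv⟩ := hvq
      have e1 : Ins Q (wpMk m (fun _ => 1) u) = wpMk m (pCont m q χ) vq := by
        apply (hIns Q).2
        refine ⟨l, hl, fun i => ?_⟩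
        rw [hv i]
        unfold powVec
        rw [dExp_Ins]
      have e2 : Ins Q (wpMk m (fun _ => 1) u') = wpMk m (pCont m q χ) vq := by
        apply (hIns Q).2
        refine ⟨l, hl, fun i => ?_⟩
        rw [hv i]
        unfold powVec
        rw [dExp_Ins]
        show (l : ℂ) ^ pCont m q χ i * (u : Fin m → ℂ) i ^ pCont m q χ i
          = (l : ℂ) ^ pCont m q χ i * (η i * (u : Fin m → ℂ) i) ^ pCont m q χ i
        rw [mul_pow, hηQχ i, one_mul]
      rw [e1, e2]
    -- the chain
    calc Quot.mk _ (⟨p, wpMk m (pCont m p.1 χ) z⟩ :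
            (p : PrimesOf m χ) × WP m (pCont m p.1 χ))
        = Quot.mk _ ⟨p, Ins p (wpMk m (fun _ => 1) u)⟩ := by rw [hInsu]
      _ = Quot.mk _ ⟨Q, Ins Q (wpMk m (fun _ => 1) u)⟩ :=
          Quot.sound ⟨p, Q, wpMk m (fun _ => 1) u, rfl, rfl⟩
      _ = Quot.mk _ ⟨Q, Ins Q (wpMk m (fun _ => 1) u')⟩ := by rw [hQeq]
      _ = Quot.mk _ ⟨p, Ins p (wpMk m (fun _ => 1) u')⟩ :=
          Quot.sound ⟨Q, p, wpMk m (fun _ => 1) u', rfl, rfl⟩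
      _ = Quot.mk _ ⟨p, wpMk m (pCont m p.1 χ) z''⟩ := by rw [hInsu']
      _ = Quot.mk _ ⟨p, wpMk m (pCont m p.1 χ) w⟩ := by
          apply IH (S.erase q) (Finset.erase_ssubset hqS) p z'' w ζ'
            (fun i => ordCompl[q] (mm i))
          · exact fun i => (Nat.ordCompl_dvd (mm i) q).trans (hdvd i)
          · intro i r hr hrd
            refine Finset.mem_erase.mpr ⟨?_, hsupp i r hr (hrd.trans (Nat.ordCompl_dvd _ _))⟩
            intro h
            rw [h] at hrd
            exact Nat.not_dvd_ordCompl hq (hmm0 i) hrd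
          · exact hζ'r
          · intro i
            show (w : Fin m → ℂ) i = ζ' i * (η i ^ (pCont m p.1 χ i) * (z : Fin m → ℂ) i)
            rw [hw i, ← hdecomp i]
            ring

lemma samePrime (hχ : ∀ i, 1 ≤ χ i)
    (hIns : ∀ p, IsEMap m (pCont m p.1 χ) (fun _ => 1) (Ins p))
    (hJ : ∀ p, IsEMap m χ (pCont m p.1 χ) (J p))
    (p : PrimesOf m χ) (z w : Sph m)
    (h : J p (wpMk m (pCont m p.1 χ) z) = J p (wpMk m (pCont m p.1 χ) w)) :
    Quot.mk (fun a b : (p : PrimesOf m χ) × WP m (pCont m p.1 χ) =>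
        ∃ (p q : PrimesOf m χ) (x : WP m (fun _ => 1)),
          a = ⟨p, Ins p x⟩ ∧ b = ⟨q, Ins q x⟩)
        ⟨p, wpMk m (pCont m p.1 χ) z⟩ =
      Quot.mk _ ⟨p, wpMk m (pCont m p.1 χ) w⟩ := by
  have hχ0 : ∀ i, χ i ≠ 0 := fun i => by have := hχ i; omega
  have hα0 : ∀ i, ordCompl[p.1] (χ i) ≠ 0 := fun i => by
    have := ordCompl_pos' hχ p i; omega
  obtain ⟨i0w, hi0w⟩ := sph_exists_ne_zero w
  obtain ⟨W0, l, hl, hW0⟩ := exists_isNorm χ hχ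
    (fun i => (w : Fin m → ℂ) i ^ ordCompl[p.1] (χ i)) ⟨i0w, pow_ne_zero _ hi0w⟩
  have hJw : J p (wpMk m (pCont m p.1 χ) w) = wpMk m χ W0 := by
    apply (hJ p).2
    refine ⟨l, hl, fun i => ?_⟩
    rw [hW0 i]
    unfold powVec
    rw [dExp_J]
  rw [hJw] at h
  obtain ⟨c, hc, hcw⟩ := (J_eq_iff J hχ hJ p z W0).mp h
  have hl0 : (l : ℂ) ≠ 0 := by exact_mod_cast hl.ne'
  set c' : ℂ := c / l with hc'def
  have hc' : c' ≠ 0 := div_ne_zero hc hl0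
  have key : ∀ i, (w : Fin m → ℂ) i ^ ordCompl[p.1] (χ i)
      = (c' ^ pCont m p.1 χ i * (z : Fin m → ℂ) i) ^ ordCompl[p.1] (χ i) := by
    intro i
    have h1 := hcw i
    rw [hW0 i] at h1
    have h2 : (w : Fin m → ℂ) i ^ ordCompl[p.1] (χ i)
        = c' ^ χ i * (z : Fin m → ℂ) i ^ ordCompl[p.1] (χ i) := by
      rw [hc'def, div_pow]
      field_simp
      linear_combination h1
    rw [h2, mul_pow, ← pow_mul, ← chi_fac hχ p i]
  have habs : ∀ i, ‖(w : Fin m → ℂ) i‖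
      = ‖c'‖ ^ pCont m p.1 χ i * ‖(z : Fin m → ℂ) i‖ := by
    intro i
    have h2 := congrArg (‖·‖) (key i)
    rw [norm_pow, norm_pow] at h2
    have h3 := pow_inj_nonneg (norm_nonneg _) (norm_nonneg _) (hα0 i) h2
    rw [h3, norm_mul, norm_pow]
  have hcabs : ‖c'‖ = 1 :=
    abs_eq_one_of z w (pCont m p.1 χ) (pCont_pos p) _ (norm_nonneg _) habs
  set z' : Sph m := ⟨fun i => c' ^ pCont m p.1 χ i * (z : Fin m → ℂ) i, by
    refine Eq.trans (Finset.sum_congr rfl fun i _ => ?_) z.2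
    show ‖c' ^ pCont m p.1 χ i * (z : Fin m → ℂ) i‖ ^ 2 = _
    rw [norm_mul, norm_pow, hcabs, one_pow, one_mul]⟩ with hz'def
  have hzz' : wpMk m (pCont m p.1 χ) z = wpMk m (pCont m p.1 χ) z' :=
    Quot.sound ⟨c', hcabs, fun i => rfl⟩
  set ζ : Fin m → ℂ := fun i =>
    if (z' : Fin m → ℂ) i = 0 then 1 else (w : Fin m → ℂ) i / (z' : Fin m → ℂ) i with hζdef
  have hkey' : ∀ i, (w : Fin m → ℂ) i ^ ordCompl[p.1] (χ i)
      = (z' : Fin m → ℂ) i ^ ordCompl[p.1] (χ i) := key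
  have hord : ∀ i, ζ i ^ ordCompl[p.1] (χ i) = 1 := by
    intro i
    by_cases h0 : (z' : Fin m → ℂ) i = 0
    · rw [hζdef]; simp only [if_pos h0, one_pow]
    · rw [hζdef]; simp only [if_neg h0]
      rw [div_pow, hkey' i, div_self (pow_ne_zero _ h0)]
  have hwz : ∀ i, (w : Fin m → ℂ) i = ζ i * (z' : Fin m → ℂ) i := by
    intro i
    by_cases h0 : (z' : Fin m → ℂ) i = 0
    · have hw0 : (w : Fin m → ℂ) i = 0 := by
        have h1 := hkey' i
        rw [h0, zero_pow (hα0 i)] at h1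
        exact pow_eq_zero_iff (hα0 i) |>.mp h1
      rw [hw0, h0, mul_zero]
    · rw [hζdef]; simp only [if_neg h0]
      rw [div_mul_cancel₀ _ h0]
  have hprod0 : (∏ i, χ i) ≠ 0 := Finset.prod_ne_zero_iff.mpr fun i _ => hχ0 i
  calc Quot.mk _ (⟨p, wpMk m (pCont m p.1 χ) z⟩ :
          (p : PrimesOf m χ) × WP m (pCont m p.1 χ))
      = Quot.mk _ ⟨p, wpMk m (pCont m p.1 χ) z'⟩ := by rw [hzz']
    _ = Quot.mk _ ⟨p, wpMk m (pCont m p.1 χ) w⟩ := by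
        apply lemB Ins hχ hIns ((∏ i, χ i).primeFactors) p z' w ζ
          (fun i => ordCompl[p.1] (χ i)) (fun i => dvd_rfl)
        · intro i r hr hrd
          refine Nat.mem_primeFactors.mpr ⟨hr, ?_, hprod0⟩
          exact (hrd.trans (Nat.ordCompl_dvd (χ i) p.1)).trans
            (Finset.dvd_prod_of_mem χ (Finset.mem_univ i))
        · exact hord
        · exact hwz

lemma sph_isCompact : IsCompact {z : Fin m → ℂ | ∑ i, ‖z i‖ ^ 2 = 1} := by
  have hcont : Continuous fun z : Fin m → ℂ => ∑ i, ‖z i‖ ^ 2 := by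
    apply continuous_finset_sum
    intro i _
    exact (continuous_norm.comp (continuous_apply i)).pow 2
  have hclosed : IsClosed {z : Fin m → ℂ | ∑ i, ‖z i‖ ^ 2 = 1} :=
    isClosed_eq hcont continuous_const
  have hbdd : Bornology.IsBounded {z : Fin m → ℂ | ∑ i, ‖z i‖ ^ 2 = 1} := by
    apply Bornology.IsBounded.subset (Metric.isBounded_closedBall (x := (0 : Fin m → ℂ)) (r := 1))
    intro z hz
    simp only [Metric.mem_closedBall]
    rw [dist_pi_le_iff zero_le_one]
    intro i
    show dist (z i) (0 : ℂ) ≤ 1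
    rw [dist_zero_right]
    have h1 : ‖z i‖ ^ 2 ≤ 1 := by
      rw [← hz]
      exact Finset.single_le_sum (f := fun j => ‖z j‖ ^ 2)
        (fun j _ => by positivity) (Finset.mem_univ i)
    nlinarith [norm_nonneg (z i)]
  exact Metric.isCompact_of_isClosed_isBounded hclosed hbdd

instance : CompactSpace (Sph m) :=
  isCompact_iff_compactSpace.mp sph_isCompact

lemma act_isometry (χ : Fin m → ℕ) (t : ℂ) (ht : ‖t‖ = 1) :
    ∀ x y : Sph m, dist (⟨fun i => t ^ χ i * (x : Fin m → ℂ) i, by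
        refine Eq.trans (Finset.sum_congr rfl fun i _ => ?_) x.2
        show ‖t ^ χ i * (x : Fin m → ℂ) i‖ ^ 2 = _
        rw [norm_mul, norm_pow, ht, one_pow, one_mul]⟩ : Sph m)
      (⟨fun i => t ^ χ i * (y : Fin m → ℂ) i, by
        refine Eq.trans (Finset.sum_congr rfl fun i _ => ?_) y.2
        show ‖t ^ χ i * (y : Fin m → ℂ) i‖ ^ 2 = _
        rw [norm_mul, norm_pow, ht, one_pow, one_mul]⟩ : Sph m) = dist x y := by
  intro x y
  rw [Subtype.dist_eq, Subtype.dist_eq]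
  have hiso : Isometry (fun z : Fin m → ℂ => fun i => t ^ χ i * z i) := by
    have : (fun z : Fin m → ℂ => fun i => t ^ χ i * z i)
        = Pi.map (fun i (x : ℂ) => t ^ χ i * x) := rfl
    rw [this]
    apply Isometry.piMap
    intro i
    apply Isometry.of_dist_eq
    intro a b
    rw [Complex.dist_eq, Complex.dist_eq, ← mul_sub, norm_mul, norm_pow, ht, one_pow, one_mul]
  exact hiso.dist_eq _ _

def actS (χ : Fin m → ℕ) (t : ℂ) (ht : ‖t‖ = 1) (x : Sph m) : Sph m :=
  ⟨fun i => t ^ χ i * (x : Fin m → ℂ) i, by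
    refine Eq.trans (Finset.sum_congr rfl fun i _ => ?_) x.2
    show ‖t ^ χ i * (x : Fin m → ℂ) i‖ ^ 2 = _
    rw [norm_mul, norm_pow, ht, one_pow, one_mul]⟩

lemma actS_isometry (χ : Fin m → ℕ) (t : ℂ) (ht : ‖t‖ = 1) :
    Isometry (actS χ t ht) := by
  apply Isometry.of_dist_eq
  intro x y
  rw [Subtype.dist_eq, Subtype.dist_eq]
  have hiso : Isometry (fun z : Fin m → ℂ => fun i => t ^ χ i * z i) := by
    have he : (fun z : Fin m → ℂ => fun i => t ^ χ i * z i)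
        = Pi.map (fun i (x : ℂ) => t ^ χ i * x) := rfl
    rw [he]
    apply Isometry.piMap
    intro i
    apply Isometry.of_dist_eq
    intro a b
    rw [Complex.dist_eq, Complex.dist_eq, ← mul_sub, norm_mul, norm_pow, ht, one_pow, one_mul]
  exact hiso.dist_eq _ _

lemma orbit_isCompact (χ : Fin m → ℕ) (z : Sph m) :
    IsCompact {x : Sph m | wRel m χ z x} := by
  have h1 : IsCompact {t : ℂ | ‖t‖ = 1} := by
    have he : {t : ℂ | ‖t‖ = 1} = Metric.sphere (0 : ℂ) 1 := by
      ext t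
      simp [Complex.dist_eq]
    rw [he]
    exact isCompact_sphere 0 1
  haveI : CompactSpace {t : ℂ // ‖t‖ = 1} :=
    isCompact_iff_compactSpace.mp h1
  have h2 : {x : Sph m | wRel m χ z x}
      = Set.range (fun t : {t : ℂ // ‖t‖ = 1} => actS χ t.1 t.2 z) := by
    ext x
    constructor
    · rintro ⟨t, ht, hx⟩
      exact ⟨⟨t, ht⟩, (Subtype.ext (funext fun i => (hx i).symm))⟩
    · rintro ⟨t, rfl⟩
      exact ⟨t.1, t.2, fun i => rfl⟩
  rw [h2]
  apply isCompact_range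
  apply Continuous.subtype_mk
  apply continuous_pi
  intro i
  exact ((continuous_subtype_val.pow _).mul continuous_const)

lemma infDist_invariant (χ : Fin m → ℕ) (y : Sph m) {x x' : Sph m} (h : wRel m χ x x') :
    Metric.infDist x {u : Sph m | wRel m χ y u} =
      Metric.infDist x' {u : Sph m | wRel m χ y u} := by
  obtain ⟨t, ht, hx'⟩ := h
  have ht0 : t ≠ 0 := fun h0 => by simp [h0] at ht
  have hx'e : x' = actS χ t ht x := Subtype.ext (funext fun i => hx' i)
  have himg : actS χ t ht '' {u : Sph m | wRel m χ y u} = {u : Sph m | wRel m χ y u} := by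
    ext v
    constructor
    · rintro ⟨u, hu, rfl⟩
      exact wRel_trans hu ⟨t, ht, fun i => rfl⟩
    · intro hv
      have ht' : ‖t⁻¹‖ = 1 := by rw [norm_inv, ht, inv_one]
      refine ⟨actS χ t⁻¹ ht' v, wRel_trans hv ⟨t⁻¹, ht', fun i => rfl⟩, ?_⟩
      apply Subtype.ext; funext i
      show t ^ χ i * (t⁻¹ ^ χ i * (v : Fin m → ℂ) i) = (v : Fin m → ℂ) i
      rw [← mul_assoc, ← mul_pow, mul_inv_cancel₀ ht0, one_pow, one_mul]
  rw [hx'e]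
  conv_rhs => rw [← himg]
  rw [Metric.infDist_image (actS_isometry χ t ht)]

lemma wp_t2 (χ : Fin m → ℕ) : T2Space (WP m χ) := by
  constructor
  intro a b hab
  obtain ⟨z, rfl⟩ := Quot.exists_rep a
  obtain ⟨w, rfl⟩ := Quot.exists_rep b
  set Oz := {x : Sph m | wRel m χ z x} with hOz
  set Ow := {x : Sph m | wRel m χ w x} with hOw
  set ρ := fun x : Sph m => Metric.infDist x Oz with hρ
  set σ := fun x : Sph m => Metric.infDist x Ow with hσ
  have hρc : Continuous ρ := Metric.continuous_infDist_pt Oz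
  have hσc : Continuous σ := Metric.continuous_infDist_pt Ow
  set U := {x : Sph m | ρ x < σ x} with hU
  set V := {x : Sph m | σ x < ρ x} with hV
  have hUo : IsOpen U := isOpen_lt hρc hσc
  have hVo : IsOpen V := isOpen_lt hσc hρc
  have hzU : z ∈ U := by
    have h1 : ρ z = 0 := Metric.infDist_zero_of_mem (wRel_refl χ z)
    have h2 : 0 < σ z := by
      rw [hσ]
      apply (IsClosed.notMem_iff_infDist_pos (orbit_isCompact χ w).isClosed
        ⟨w, wRel_refl χ w⟩).mp
      intro hz
      exact hab (Quot.sound hz).symm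
    show ρ z < σ z
    rw [h1]; exact h2
  have hwV : w ∈ V := by
    have h1 : σ w = 0 := Metric.infDist_zero_of_mem (wRel_refl χ w)
    have h2 : 0 < ρ w := by
      rw [hρ]
      apply (IsClosed.notMem_iff_infDist_pos (orbit_isCompact χ z).isClosed
        ⟨z, wRel_refl χ z⟩).mp
      intro hz
      exact hab (Quot.sound hz)
    show σ w < ρ w
    rw [h1]; exact h2
  have hUsat : ∀ x x', wRel m χ x x' → (x ∈ U ↔ x' ∈ U) := by
    intro x x' hxx'
    show ρ x < σ x ↔ ρ x' < σ x'
    rw [hρ, hσ]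
    simp only
    rw [infDist_invariant χ z hxx', infDist_invariant χ w hxx']
  have hVsat : ∀ x x', wRel m χ x x' → (x ∈ V ↔ x' ∈ V) := by
    intro x x' hxx'
    show σ x < ρ x ↔ σ x' < ρ x'
    rw [hρ, hσ]
    simp only
    rw [infDist_invariant χ z hxx', infDist_invariant χ w hxx']
  have hpreU : Quot.mk (wRel m χ) ⁻¹' (Quot.mk (wRel m χ) '' U) = U := by
    ext x
    simp only [Set.mem_preimage, Set.mem_image]
    constructor
    · rintro ⟨u, hu, he⟩
      exact (hUsat u x (((wRel_equiv χ).eqvGen_iff).mp (Quot.eqvGen_exact he))).mp hu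
    · intro hx
      exact ⟨x, hx, rfl⟩
  have hpreV : Quot.mk (wRel m χ) ⁻¹' (Quot.mk (wRel m χ) '' V) = V := by
    ext x
    simp only [Set.mem_preimage, Set.mem_image]
    constructor
    · rintro ⟨u, hu, he⟩
      exact (hVsat u x (((wRel_equiv χ).eqvGen_iff).mp (Quot.eqvGen_exact he))).mp hu
    · intro hx
      exact ⟨x, hx, rfl⟩
  refine ⟨Quot.mk _ '' U, Quot.mk _ '' V, ?_, ?_, ⟨z, hzU, rfl⟩, ⟨w, hwV, rfl⟩, ?_⟩
  · rw [← isQuotientMap_quot_mk.isOpen_preimage, hpreU]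
    exact hUo
  · rw [← isQuotientMap_quot_mk.isOpen_preimage, hpreV]
    exact hVo
  · rw [Set.disjoint_left]
    rintro a ⟨u, hu, rfl⟩ ⟨v, hv, he⟩
    have hrel := ((wRel_equiv χ).eqvGen_iff).mp (Quot.eqvGen_exact he)
    have h1 : v ∈ U := (hUsat u v (wRel_symm hrel)).mp hu
    have h2 : ρ v < σ v := h1
    have h3 : σ v < ρ v := hv
    exact lt_asymm h2 h3

lemma primesOf_finite (hχ : ∀ i, 1 ≤ χ i) : Finite (PrimesOf m χ) := by
  have hsub : {p : ℕ | p.Prime ∧ ∃ i, p ∣ χ i} ⊆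
      ↑(Finset.univ.biUnion fun i : Fin m => (χ i).primeFactors) := by
    rintro p ⟨hp, i, hdvd⟩
    simp only [Finset.coe_biUnion, Set.mem_iUnion, Finset.mem_coe, Finset.mem_univ]
    exact ⟨i, trivial, Nat.mem_primeFactors.mpr ⟨hp, hdvd, by have := hχ i; omega⟩⟩
  exact Set.Finite.to_subtype ((Finset.finite_toSet _).subset hsub)

theorem main_thm (hχ : ∀ i, 1 ≤ χ i) (hQ : Nonempty (PrimesOf m χ))
    (hIns : ∀ p, IsEMap m (pCont m p.1 χ) (fun _ => 1) (Ins p))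
    (hJ : ∀ p, IsEMap m χ (pCont m p.1 χ) (J p)) :
    ∃ F : Quot (fun a b : (p : PrimesOf m χ) × WP m (pCont m p.1 χ) =>
        ∃ (p q : PrimesOf m χ) (z : WP m (fun _ => 1)),
          a = ⟨p, Ins p z⟩ ∧ b = ⟨q, Ins q z⟩) ≃ₜ WP m χ,
      ∀ (p : PrimesOf m χ) (x : WP m (pCont m p.1 χ)),
        F (Quot.mk _ ⟨p, x⟩) = J p x := by
  have hcompat : ∀ (x : WP m (fun _ => 1)) (p q : PrimesOf m χ),
      J p (Ins p x) = J q (Ins q x) := by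
    intro x p q
    induction x using Quot.ind with
    | _ u =>
      obtain ⟨i0, hi0⟩ := sph_exists_ne_zero u
      obtain ⟨Nu, hNu⟩ := exists_isNorm χ hχ (fun i => (u : Fin m → ℂ) i ^ χ i)
        ⟨i0, pow_ne_zero _ hi0⟩
      have e1 := J_Ins_eq Ins J hχ hIns hJ p u Nu hNu
      have e2 := J_Ins_eq Ins J hχ hIns hJ q u Nu hNu
      exact e1.trans e2.symm
  have hwd : ∀ a b : (p : PrimesOf m χ) × WP m (pCont m p.1 χ),
      (∃ (p q : PrimesOf m χ) (z : WP m (fun _ => 1)),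
        a = ⟨p, Ins p z⟩ ∧ b = ⟨q, Ins q z⟩) →
      J a.1 a.2 = J b.1 b.2 := by
    rintro a b ⟨p, q, x, rfl, rfl⟩
    exact hcompat x p q
  set F0 : Quot (fun a b : (p : PrimesOf m χ) × WP m (pCont m p.1 χ) =>
      ∃ (p q : PrimesOf m χ) (z : WP m (fun _ => 1)),
        a = ⟨p, Ins p z⟩ ∧ b = ⟨q, Ins q z⟩) → WP m χ :=
    Quot.lift (fun s => J s.1 s.2) hwd with hF0
  have hcont : Continuous F0 := by
    apply continuous_quot_lift
    apply continuous_sigma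
    intro p
    exact (hJ p).1
  have hsurj : Function.Surjective F0 := by
    intro y
    induction y using Quot.ind with
    | _ w =>
      obtain ⟨p0⟩ := hQ
      obtain ⟨z, hz⟩ := J_surj J hχ hJ p0 w
      exact ⟨Quot.mk _ ⟨p0, wpMk m (pCont m p0.1 χ) z⟩, hz⟩
  have hinj : Function.Injective F0 := by
    intro a b
    induction a using Quot.ind with
    | _ s =>
      induction b using Quot.ind with
      | _ r =>
        obtain ⟨p, x⟩ := s
        obtain ⟨q, y⟩ := r
        induction x using Quot.ind with
        | _ z =>
          induction y using Quot.ind with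
          | _ w =>
            intro h
            have h' : J p (wpMk m (pCont m p.1 χ) z) = J q (wpMk m (pCont m q.1 χ) w) := h
            obtain ⟨u, μ, hμ, hInsu, hu⟩ := Ins_surj Ins hχ hIns q w
            obtain ⟨i0, hi0⟩ := sph_exists_ne_zero u
            obtain ⟨z₂, l, hl, hz₂⟩ := exists_isNorm (pCont m p.1 χ) (pCont_pos p)
              (fun i => (u : Fin m → ℂ) i ^ (pCont m p.1 χ i)) ⟨i0, pow_ne_zero _ hi0⟩
            have h2 : Ins p (wpMk m (fun _ => 1) u) = wpMk m (pCont m p.1 χ) z₂ := by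
              apply (hIns p).2
              refine ⟨l, hl, fun i => ?_⟩
              rw [hz₂ i]
              unfold powVec
              rw [dExp_Ins]
            have h3 : J p (wpMk m (pCont m p.1 χ) z) = J p (wpMk m (pCont m p.1 χ) z₂) := by
              rw [← h2, hcompat (wpMk m (fun _ => 1) u) p q, hInsu, h']
            have h4 := samePrime Ins J hχ hIns hJ p z z₂ h3
            have h5 : Quot.mk (fun a b : (p : PrimesOf m χ) × WP m (pCont m p.1 χ) =>
                  ∃ (p q : PrimesOf m χ) (x : WP m (fun _ => 1)),
                    a = ⟨p, Ins p x⟩ ∧ b = ⟨q, Ins q x⟩)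
                  ⟨p, wpMk m (pCont m p.1 χ) z₂⟩
                = Quot.mk _ ⟨q, wpMk m (pCont m q.1 χ) w⟩ := by
              rw [← h2, ← hInsu]
              exact Quot.sound ⟨p, q, wpMk m (fun _ => 1) u, rfl, rfl⟩
            exact h4.trans h5
  haveI : T2Space (WP m χ) := wp_t2 χ
  haveI : Finite (PrimesOf m χ) := primesOf_finite hχ
  haveI : CompactSpace ((p : PrimesOf m χ) × WP m (pCont m p.1 χ)) := by infer_instance
  set E := Equiv.ofBijective F0 ⟨hinj, hsurj⟩ with hE
  have hcE : Continuous E := hcont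
  exact ⟨hcE.homeoOfEquivCompactToT2, fun p x => rfl⟩

end Main

/-- `P(χ)`, with the insertion maps `e(χ/(p)χ)`, is the colimit of the
diagram of the maps `e((p)χ/1) : ℂP^n → P((p)χ)` over the primes `p ∈ Q(χ)`: the map from
the quotient `R` of `⊔_p P((p)χ)` by the equivalence relation generated by
`e((p)χ/1)(z) ∼ e((q)χ/1)(z)` induced by the maps `e(χ/(p)χ)` is well defined and a
homeomorphism. -/
theorem statement11 (n : ℕ) (hn : 1 ≤ n) (χ : Fin (n + 1) → ℕ) (hχ : ∀ i, 1 ≤ χ i)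
    (hQ : Nonempty (PrimesOf (n + 1) χ))
    (Ins : ∀ p : PrimesOf (n + 1) χ, WP (n + 1) (fun _ => 1) → WP (n + 1) (pCont (n + 1) p.1 χ))
    (hIns : ∀ p, IsEMap (n + 1) (pCont (n + 1) p.1 χ) (fun _ => 1) (Ins p))
    (J : ∀ p : PrimesOf (n + 1) χ, WP (n + 1) (pCont (n + 1) p.1 χ) → WP (n + 1) χ)
    (hJ : ∀ p, IsEMap (n + 1) χ (pCont (n + 1) p.1 χ) (J p)) :
    ∃ F : Quot (fun a b : (p : PrimesOf (n + 1) χ) × WP (n + 1) (pCont (n + 1) p.1 χ) =>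
        ∃ (p q : PrimesOf (n + 1) χ) (z : WP (n + 1) (fun _ => 1)),
          a = ⟨p, Ins p z⟩ ∧ b = ⟨q, Ins q z⟩) ≃ₜ WP (n + 1) χ,
      ∀ (p : PrimesOf (n + 1) χ) (x : WP (n + 1) (pCont (n + 1) p.1 χ)),
        F (Quot.mk _ ⟨p, x⟩) = J p x := by
  exact main_thm (m := n + 1) Ins J hχ hQ hIns hJ
end
end
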